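/- arXiv:2206.08095 — 5 statements merged into one kernel-verified Lean document; each statement's English description precedes it below -/
import Mathlib

section
/- For every real α ≥ 2, the limit b(α) = lim_{n→∞} b_n(α) exists and equals inf_n b_n(α). -/
open scoped ENNReal

set_option linter.unusedSectionVars false

attribute [local instance 10] Classical.propDecidable

/-- A multigraph (parallel edges allowed): a finite edge type with two endpoint maps. -/
structure Multigraph (V : Type) where
  E : Type
  [fE : Fintype E]
  fst : E → V
  snd : E → V

attribute [instance] Multigraph.fE

namespace Multigraph

variable {V : Type} [Fintype V] [DecidableEq V]

/-- The number of edges of a multigraph. -/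
noncomputable def edgeCount (G : Multigraph V) : ℕ := Fintype.card G.E

/-- The net current flowing out of `v` under the current assignment `f`
(the current `f e` flows from `G.fst e` to `G.snd e`). -/
noncomputable def netFlow (G : Multigraph V) (f : G.E → ℝ) (v : V) : ℝ :=
  ∑ e : G.E, ((if G.fst e = v then f e else 0) - (if G.snd e = v then f e else 0))

/-- A unit flow from `x` to `y`: Kirchhoff's current law holds at every vertex other
than `x` and `y`, and the net current out of `x` is `1`. -/
def IsUnitFlow (G : Multigraph V) (x y : V) (f : G.E → ℝ) : Prop :=
  G.netFlow f x = 1 ∧ ∀ v : V, v ≠ x → v ≠ y → G.netFlow f v = 0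

/-- The effective resistance between `x` and `y`: the least energy `∑ e, (I e)^2` of a
unit flow from `x` to `y` (`∞` if there is no such flow, `0` if `x = y`). -/
noncomputable def effRes (G : Multigraph V) (x y : V) : ℝ≥0∞ :=
  if x = y then 0
  else ⨅ f : {f : G.E → ℝ // G.IsUnitFlow x y f}, ENNReal.ofReal (∑ e : G.E, (f.1 e) ^ 2)

/-- Adjacency in a multigraph. -/
def Adj (G : Multigraph V) (u v : V) : Prop :=
  ∃ e : G.E, (G.fst e = u ∧ G.snd e = v) ∨ (G.fst e = v ∧ G.snd e = u)

/-- A multigraph is connected if every vertex is reachable from every other. -/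
def Connected (G : Multigraph V) : Prop :=
  ∀ u v : V, Relation.ReflTransGen G.Adj u v

/-- The degree of a vertex (loops count twice). -/
noncomputable def degree (G : Multigraph V) (v : V) : ℕ :=
  (Finset.univ.filter fun e : G.E => G.fst e = v).card +
    (Finset.univ.filter fun e : G.E => G.snd e = v).card

/-- The number of leaves (vertices of degree 1). -/
noncomputable def leafCount (G : Multigraph V) : ℕ :=
  (Finset.univ.filter fun v : V => G.degree v = 1).card

/-- `A(G)`: the average effective resistance over unordered pairs of distinct vertices. -/
noncomputable def avgPairRes (G : Multigraph V) : ℝ≥0∞ :=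
  (∑ x : V, ∑ y : V, G.effRes x y) / (2 * ((Fintype.card V).choose 2 : ℝ≥0∞))

/-- `A'(G)`: the average effective resistance over ordered pairs of vertices. -/
noncomputable def avgOrdRes (G : Multigraph V) : ℝ≥0∞ :=
  (∑ x : V, ∑ y : V, G.effRes x y) / ((Fintype.card V : ℝ≥0∞) ^ 2)

/-- The total effective resistance to the root `ρ`. -/
noncomputable def Rtot (G : Multigraph V) (ρ : V) : ℝ≥0∞ := ∑ x : V, G.effRes ρ x

/-- `B(G)`: the average resistance of a non-root vertex to the root `ρ`. -/
noncomputable def rootedAvg (G : Multigraph V) (ρ : V) : ℝ≥0∞ :=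
  G.Rtot ρ / ((Fintype.card V - 1 : ℕ) : ℝ≥0∞)

/-- A tree: a connected multigraph with one more vertex than edge. -/
def IsTree (G : Multigraph V) : Prop := G.Connected ∧ G.edgeCount + 1 = Fintype.card V

/-- `v` is within distance `ℓ` of `x` (there is a lazy walk of length `ℓ` from `x` to `v`). -/
def WithinDist (G : Multigraph V) (ℓ : ℕ) (x v : V) : Prop :=
  ∃ p : ℕ → V, p 0 = x ∧ p ℓ = v ∧ ∀ i, i < ℓ → p i = p (i + 1) ∨ G.Adj (p i) (p (i + 1))

end Multigraph

open Multigraph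

/-- `b_n(α)`: the least value of `B(G)` over rooted graphs with `n` non-root vertices
and at most `αn/2` edges (the root may be any vertex). -/
noncomputable def bFun (n : ℕ) (α : ℝ) : ℝ≥0∞ :=
  ⨅ G : {p : Multigraph (Fin (n + 1)) × Fin (n + 1) // (p.1.edgeCount : ℝ) ≤ α * n / 2},
    rootedAvg G.1.1 G.1.2

/-- `a_n(α)`: the least value of `A'(G)` over graphs with `n` vertices and at most
`αn/2` edges. -/
noncomputable def aFun (n : ℕ) (α : ℝ) : ℝ≥0∞ :=
  ⨅ G : {G : Multigraph (Fin n) // (G.edgeCount : ℝ) ≤ α * n / 2}, avgOrdRes G.1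

/-- `G_S`: add a new root vertex `Fin.last n` joined by one edge to each entry of the
`s`-tuple (multiset) `S`. -/
noncomputable def addRoot {n : ℕ} (G : Multigraph (Fin n)) {s : ℕ} (S : Fin s → Fin n) :
    Multigraph (Fin (n + 1)) where
  E := G.E ⊕ Fin s
  fst := Sum.elim (fun e => (G.fst e).castSucc) fun _ => Fin.last n
  snd := Sum.elim (fun e => (G.snd e).castSucc) fun i => (S i).castSucc

section Trees

variable {V : Type} [Fintype V] [DecidableEq V]

/-- The map identifying all leaves of `T` to the single new vertex `Sum.inr ()`. -/
noncomputable def leafId (T : Multigraph V) (v : V) : V ⊕ Unit :=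
  if T.degree v = 1 then Sum.inr () else Sum.inl v

/-- The multigraph obtained from `T` by identifying all its leaves to one vertex. -/
noncomputable def identifyLeaves (T : Multigraph V) : Multigraph (V ⊕ Unit) where
  E := T.E
  fst := fun e => leafId T (T.fst e)
  snd := fun e => leafId T (T.snd e)

/-- `R(x,T)`: the effective resistance between `x` and the vertex obtained by
identifying all the leaves of `T`. -/
noncomputable def treeRes (T : Multigraph V) (x : V) : ℝ≥0∞ :=
  (identifyLeaves T).effRes (leafId T x) (Sum.inr ())

/-- The rooted graph formed from `T` and a set `S` of sinks: add a root `Sum.inr ()`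
joined to each `v ∈ S` by `degree v - 1` parallel edges. -/
noncomputable def randRooted (T : Multigraph V) (S : Finset V) : Multigraph (V ⊕ Unit) where
  E := T.E ⊕ (Σ v : {v : V // v ∈ S}, Fin (T.degree v.1 - 1))
  fst := Sum.elim (fun e => Sum.inl (T.fst e)) fun p => Sum.inl p.1.1
  snd := Sum.elim (fun e => Sum.inl (T.snd e)) fun _ => Sum.inr ()

/-- The subgraph induced on the vertices satisfying `P`. -/
noncomputable def inducedSub (G : Multigraph V) (P : V → Prop) : Multigraph {v : V // P v} where
  E := {e : G.E // P (G.fst e) ∧ P (G.snd e)}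
  fst := fun e => ⟨G.fst e.1, e.2.1⟩
  snd := fun e => ⟨G.snd e.1, e.2.2⟩

lemma withinDist_self (G : Multigraph V) (ℓ : ℕ) (x : V) : G.WithinDist ℓ x x :=
  ⟨fun _ => x, rfl, rfl, fun _ _ => Or.inl rfl⟩

/-- `R(x, T_x)` where `T_x` is the subgraph of `G` induced by the vertices within
distance `ℓ` of `x`. -/
noncomputable def localRes (G : Multigraph V) (ℓ : ℕ) (x : V) : ℝ≥0∞ :=
  treeRes (inducedSub G (G.WithinDist ℓ x)) ⟨x, withinDist_self G ℓ x⟩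

/-- cyclic successor on `Fin k` -/
def cycSucc {k : ℕ} (i : Fin k) : Fin k :=
  ⟨(i.1 + 1) % k, Nat.mod_lt _ (Nat.lt_of_le_of_lt (Nat.zero_le i.1) i.isLt)⟩

/-- `G` contains a cycle with `k` (distinct) vertices and `k` distinct edges. -/
def HasCycleLength (G : Multigraph V) (k : ℕ) : Prop :=
  0 < k ∧ ∃ (v : Fin k → V) (e : Fin k → G.E), Function.Injective v ∧ Function.Injective e ∧
    ∀ i : Fin k, (G.fst (e i) = v i ∧ G.snd (e i) = v (cycSucc i)) ∨
      (G.fst (e i) = v (cycSucc i) ∧ G.snd (e i) = v i)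

/-- `G⁺/x`: delete the two edges `e₁, e₂` at the degree-2 vertex `x`, add an edge
`y₁y₂` (contracting `y₁x`), and reuse `x` as a new leaf attached to the root `ρ`. -/
noncomputable def contractPlus (G : Multigraph V) (x ρ : V) (e₁ e₂ : G.E) (y₁ y₂ : V) :
    Multigraph V where
  E := {e : G.E // e ≠ e₁ ∧ e ≠ e₂} ⊕ Fin 2
  fst := Sum.elim (fun e => G.fst e.1) fun i => if i = 0 then y₁ else x
  snd := Sum.elim (fun e => G.snd e.1) fun i => if i = 0 then y₂ else ρ

end Trees

/-- A Queen-Bee network: every non-root vertex is joined to the root. -/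
def QueenBee {n : ℕ} (G : Multigraph (Fin (n + 1))) (ρ : Fin (n + 1)) : Prop :=
  ∀ v : Fin (n + 1), v ≠ ρ → G.Adj ρ v

section Weighted

variable {V : Type} [Fintype V] [DecidableEq V]

/-- A unit flow from `x` to `y` in a weighted network with conductances `c`:
antisymmetric, zero on edges of zero conductance, and satisfying Kirchhoff's
current law away from `x` and `y`, with net current `1` out of `x`. -/
def IsWUnitFlow (c : V → V → ℝ) (x y : V) (f : V → V → ℝ) : Prop :=
  (∀ u v, f u v = - f v u) ∧ (∀ u v, c u v = 0 → f u v = 0) ∧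
    (∑ v : V, f x v) = 1 ∧ ∀ u : V, u ≠ x → u ≠ y → (∑ v : V, f u v) = 0

/-- The effective resistance between `x` and `y` in the weighted network with
conductances `c`: the least energy `∑_{uv} I_{uv}²/c_{uv}` of a unit flow. -/
noncomputable def weffRes (c : V → V → ℝ) (x y : V) : ℝ≥0∞ :=
  if x = y then 0
  else ⨅ f : {f : V → V → ℝ // IsWUnitFlow c x y f},
    ENNReal.ofReal ((1 / 2) * ∑ u : V, ∑ v : V, (f.1 u v) ^ 2 / c u v)

end Weighted

namespace BLimit

open Multigraph

variable {M : ℕ}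

/-- Abstract bijection naming the vertices of the glued graph: `q` copies of the
non-root vertices of `G`, `r` pendant vertices, and one root. -/
noncomputable def ev (M q r : ℕ) (ρ : Fin (M+1)) :
    ((Fin q × {v : Fin (M+1) // v ≠ ρ}) ⊕ (Fin r ⊕ Unit)) ≃ Fin (q*M + r + 1) :=
  Fintype.equivFinOfCardEq (by
    simp [Fintype.card_subtype_compl]
    ring)

noncomputable def emb (q r : ℕ) (ρ : Fin (M+1)) (j : Fin q) (v : Fin (M+1)) :
    Fin (q*M + r + 1) :=
  if h : v = ρ then ev M q r ρ (Sum.inr (Sum.inr ())) else ev M q r ρ (Sum.inl (j, ⟨v, h⟩))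

noncomputable def pend (q r : ℕ) (ρ : Fin (M+1)) (i : Fin r) : Fin (q*M + r + 1) :=
  ev M q r ρ (Sum.inr (Sum.inl i))

noncomputable def root' (M q r : ℕ) (ρ : Fin (M+1)) : Fin (q*M + r + 1) :=
  ev M q r ρ (Sum.inr (Sum.inr ()))

lemma emb_root (q r : ℕ) (ρ : Fin (M+1)) (j : Fin q) : emb q r ρ j ρ = root' M q r ρ :=
  dif_pos rfl

lemma emb_eq_root_iff (q r : ℕ) (ρ : Fin (M+1)) (j : Fin q) (v : Fin (M+1)) :
    emb q r ρ j v = root' M q r ρ ↔ v = ρ := by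
  constructor
  · intro h
    by_contra hv
    rw [emb, dif_neg hv] at h
    exact absurd ((ev M q r ρ).injective h) (by simp)
  · intro h; rw [h, emb_root]

lemma emb_inj_iff (q r : ℕ) (ρ : Fin (M+1)) (j : Fin q) (v w : Fin (M+1)) :
    emb q r ρ j v = emb q r ρ j w ↔ v = w := by
  constructor
  · intro h
    by_cases hv : v = ρ <;> by_cases hw : w = ρ
    · rw [hv, hw]
    · rw [hv, emb_root] at h; exact absurd ((emb_eq_root_iff q r ρ j w).mp h.symm) hw
    · rw [hw, emb_root] at h; exact absurd ((emb_eq_root_iff q r ρ j v).mp h) hv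
    · rw [emb, dif_neg hv, emb, dif_neg hw] at h
      have := (ev M q r ρ).injective h
      simpa using congrArg (fun x => (Sum.elim (fun p => (p.2 : Fin (M+1))) (fun _ => ρ)) x) this
  · intro h; rw [h]

lemma pend_ne_root (q r : ℕ) (ρ : Fin (M+1)) (i : Fin r) : pend q r ρ i ≠ root' M q r ρ := by
  intro h; exact absurd ((ev M q r ρ).injective h) (by simp)

lemma pend_ne_emb (q r : ℕ) (ρ : Fin (M+1)) (i : Fin r) (j : Fin q) (v : Fin (M+1)) :
    pend q r ρ i ≠ emb q r ρ j v := by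
  intro h
  rw [emb] at h
  split at h
  · exact absurd ((ev M q r ρ).injective h) (by simp)
  · exact absurd ((ev M q r ρ).injective h) (by simp)

/-- The glued graph: `q` copies of `G` glued at the root, plus `r` pendant vertices. -/
noncomputable def Hg (q r : ℕ) (G : Multigraph (Fin (M+1))) (ρ : Fin (M+1)) :
    Multigraph (Fin (q*M + r + 1)) where
  E := (Fin q × G.E) ⊕ Fin r
  fst := Sum.elim (fun p => emb q r ρ p.1 (G.fst p.2)) fun i => pend q r ρ i
  snd := Sum.elim (fun p => emb q r ρ p.1 (G.snd p.2)) fun _ => root' M q r ρ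

lemma edgeCount_Hg (q r : ℕ) (G : Multigraph (Fin (M+1))) (ρ : Fin (M+1)) :
    (Hg q r G ρ).edgeCount = q * G.edgeCount + r := by
  show Fintype.card ((Fin q × G.E) ⊕ Fin r) = _
  simp [Multigraph.edgeCount]

/-- The transferred flow: the flow `f` on copy `j`, zero elsewhere. -/
noncomputable def tf (q r : ℕ) (G : Multigraph (Fin (M+1))) (j : Fin q) (f : G.E → ℝ) :
    (Fin q × G.E) ⊕ Fin r → ℝ :=
  Sum.elim (fun p => if p.1 = j then f p.2 else 0) fun _ => 0

lemma netFlow_tf (q r : ℕ) (G : Multigraph (Fin (M+1))) (ρ : Fin (M+1)) (j : Fin q)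
    (f : G.E → ℝ) (u : Fin (q*M + r + 1)) :
    (Hg q r G ρ).netFlow (tf q r G j f) u
      = ∑ e : G.E, ((if emb q r ρ j (G.fst e) = u then f e else 0)
          - (if emb q r ρ j (G.snd e) = u then f e else 0)) := by
  show (∑ e : (Fin q × G.E) ⊕ Fin r, _) = _
  rw [Fintype.sum_sum_type, Fintype.sum_prod_type]
  have h2 : ∀ i : Fin r,
      ((if (Hg q r G ρ).fst (Sum.inr i) = u then tf q r G j f (Sum.inr i) else 0)
        - (if (Hg q r G ρ).snd (Sum.inr i) = u then tf q r G j f (Sum.inr i) else 0)) = 0 := by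
    intro i; simp [tf]
  rw [Finset.sum_congr rfl (fun i _ => h2 i), Finset.sum_const, smul_zero, add_zero]
  have h1 : ∀ j' : Fin q,
      (∑ e : G.E, ((if (Hg q r G ρ).fst (Sum.inl (j', e)) = u then tf q r G j f (Sum.inl (j', e)) else 0)
        - (if (Hg q r G ρ).snd (Sum.inl (j', e)) = u then tf q r G j f (Sum.inl (j', e)) else 0)))
      = if j' = j then (∑ e : G.E, ((if emb q r ρ j (G.fst e) = u then f e else 0)
          - (if emb q r ρ j (G.snd e) = u then f e else 0))) else 0 := by
    intro j'
    by_cases h : j' = j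
    · subst h; simp [Hg, tf]
    · simp [Hg, tf, h]
  rw [Finset.sum_congr rfl (fun j' _ => h1 j'), Finset.sum_ite_eq' Finset.univ j]
  simp

lemma energy_tf (q r : ℕ) (G : Multigraph (Fin (M+1))) (ρ : Fin (M+1)) (j : Fin q)
    (f : G.E → ℝ) :
    (∑ e : (Hg q r G ρ).E, (tf q r G j f e) ^ 2) = ∑ e : G.E, f e ^ 2 := by
  show (∑ e : (Fin q × G.E) ⊕ Fin r, _) = _
  rw [Fintype.sum_sum_type, Fintype.sum_prod_type]
  have h1 : ∀ j' : Fin q, (∑ e : G.E, (tf q r G j f (Sum.inl (j', e))) ^ 2)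
      = if j' = j then ∑ e : G.E, f e ^ 2 else 0 := by
    intro j'
    by_cases h : j' = j
    · subst h; simp [tf]
    · simp [tf, h]
  rw [Finset.sum_congr rfl (fun j' _ => h1 j'), Finset.sum_ite_eq' Finset.univ j]
  simp [tf]

lemma netFlow_tf_emb (q r : ℕ) (G : Multigraph (Fin (M+1))) (ρ : Fin (M+1)) (j : Fin q)
    (f : G.E → ℝ) (w : Fin (M+1)) :
    (Hg q r G ρ).netFlow (tf q r G j f) (emb q r ρ j w) = G.netFlow f w := by
  rw [netFlow_tf, Multigraph.netFlow]
  refine Finset.sum_congr rfl fun e _ => ?_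
  simp only [emb_inj_iff q r ρ j]

lemma netFlow_tf_other (q r : ℕ) (G : Multigraph (Fin (M+1))) (ρ : Fin (M+1)) (j : Fin q)
    (f : G.E → ℝ) (u : Fin (q*M + r + 1)) (hu : ∀ w, emb q r ρ j w ≠ u) :
    (Hg q r G ρ).netFlow (tf q r G j f) u = 0 := by
  rw [netFlow_tf]
  refine Finset.sum_eq_zero fun e _ => ?_
  rw [if_neg (hu _), if_neg (hu _), sub_zero]

lemma isUnitFlow_tf (q r : ℕ) (G : Multigraph (Fin (M+1))) (ρ : Fin (M+1)) (j : Fin q)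
    (v : Fin (M+1)) (hv : v ≠ ρ) (f : G.E → ℝ) (hf : G.IsUnitFlow ρ v f) :
    (Hg q r G ρ).IsUnitFlow (root' M q r ρ) (emb q r ρ j v) (tf q r G j f) := by
  constructor
  · rw [← emb_root q r ρ j, netFlow_tf_emb]; exact hf.1
  · intro u hu1 hu2
    by_cases h : ∃ w, emb q r ρ j w = u
    · obtain ⟨w, rfl⟩ := h
      rw [netFlow_tf_emb]
      refine hf.2 w (fun hw => hu1 ?_) (fun hw => hu2 ?_)
      · rw [hw, emb_root]
      · rw [hw]
    · push_neg at h
      exact netFlow_tf_other q r G ρ j f u h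

lemma effRes_le_of_flow {V : Type} [Fintype V] [DecidableEq V] (G : Multigraph V)
    {x y : V} (hxy : x ≠ y) (f : G.E → ℝ) (hf : G.IsUnitFlow x y f) :
    G.effRes x y ≤ ENNReal.ofReal (∑ e : G.E, f e ^ 2) := by
  rw [Multigraph.effRes, if_neg hxy]
  exact iInf_le (fun g : {g : G.E → ℝ // G.IsUnitFlow x y g} =>
    ENNReal.ofReal (∑ e : G.E, g.1 e ^ 2)) ⟨f, hf⟩

lemma effRes_Hg_emb (q r : ℕ) (G : Multigraph (Fin (M+1))) (ρ : Fin (M+1)) (j : Fin q)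
    (v : Fin (M+1)) :
    (Hg q r G ρ).effRes (root' M q r ρ) (emb q r ρ j v) ≤ G.effRes ρ v := by
  by_cases hv : v = ρ
  · subst hv; rw [emb_root, Multigraph.effRes, if_pos rfl]; exact zero_le
  · conv_rhs => rw [Multigraph.effRes, if_neg (fun h : ρ = v => hv h.symm)]
    refine le_iInf fun g => ?_
    have hne : root' M q r ρ ≠ emb q r ρ j v := by
      intro h; exact hv ((emb_eq_root_iff q r ρ j v).mp h.symm)
    calc (Hg q r G ρ).effRes (root' M q r ρ) (emb q r ρ j v)
        ≤ ENNReal.ofReal (∑ e : (Hg q r G ρ).E, (tf q r G j g.1 e) ^ 2) :=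
          effRes_le_of_flow _ hne _ (isUnitFlow_tf q r G ρ j v hv g.1 g.2)
      _ = ENNReal.ofReal (∑ e : G.E, g.1 e ^ 2) := by rw [energy_tf]

/-- The pendant flow. -/
noncomputable def pf (q r : ℕ) (G : Multigraph (Fin (M+1))) (i : Fin r) :
    (Fin q × G.E) ⊕ Fin r → ℝ :=
  Sum.elim (fun _ => 0) fun i' => if i' = i then (-1 : ℝ) else 0

lemma netFlow_pf (q r : ℕ) (G : Multigraph (Fin (M+1))) (ρ : Fin (M+1)) (i : Fin r)
    (u : Fin (q*M + r + 1)) :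
    (Hg q r G ρ).netFlow (pf q r G i) u
      = (if pend q r ρ i = u then (-1 : ℝ) else 0) - (if root' M q r ρ = u then (-1 : ℝ) else 0) := by
  show (∑ e : (Fin q × G.E) ⊕ Fin r, _) = _
  rw [Fintype.sum_sum_type]
  have h1 : ∀ p : Fin q × G.E,
      ((if (Hg q r G ρ).fst (Sum.inl p) = u then pf q r G i (Sum.inl p) else 0)
        - (if (Hg q r G ρ).snd (Sum.inl p) = u then pf q r G i (Sum.inl p) else 0)) = 0 := by
    intro p; simp [pf]
  rw [Finset.sum_congr rfl (fun p _ => h1 p), Finset.sum_const, smul_zero, zero_add]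
  have h2 : ∀ i' : Fin r,
      ((if (Hg q r G ρ).fst (Sum.inr i') = u then pf q r G i (Sum.inr i') else 0)
        - (if (Hg q r G ρ).snd (Sum.inr i') = u then pf q r G i (Sum.inr i') else 0))
      = if i' = i then ((if pend q r ρ i = u then (-1 : ℝ) else 0)
          - (if root' M q r ρ = u then (-1 : ℝ) else 0)) else 0 := by
    intro i'
    by_cases h : i' = i
    · subst h; simp [Hg, pf]
    · simp [Hg, pf, h]
  rw [Finset.sum_congr rfl (fun i' _ => h2 i'), Finset.sum_ite_eq' Finset.univ i]
  simp

lemma effRes_Hg_pend (q r : ℕ) (G : Multigraph (Fin (M+1))) (ρ : Fin (M+1)) (i : Fin r) :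
    (Hg q r G ρ).effRes (root' M q r ρ) (pend q r ρ i) ≤ 1 := by
  have hne : root' M q r ρ ≠ pend q r ρ i := fun h => pend_ne_root q r ρ i h.symm
  have hflow : (Hg q r G ρ).IsUnitFlow (root' M q r ρ) (pend q r ρ i) (pf q r G i) := by
    constructor
    · rw [netFlow_pf, if_neg (fun h => hne h.symm), if_pos rfl]; ring
    · intro u hu1 hu2
      rw [netFlow_pf, if_neg (fun h => hu2 h.symm), if_neg (fun h => hu1 h.symm), sub_zero]
  have := effRes_le_of_flow _ hne _ hflow
  refine le_trans this (le_of_eq ?_)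
  have : (∑ e : (Hg q r G ρ).E, (pf q r G i e) ^ 2) = 1 := by
    show (∑ e : (Fin q × G.E) ⊕ Fin r, _) = _
    rw [Fintype.sum_sum_type]
    simp [pf, Finset.sum_ite_eq']
  rw [this, ENNReal.ofReal_one]

lemma Rtot_Hg_le (q r : ℕ) (G : Multigraph (Fin (M+1))) (ρ : Fin (M+1)) :
    (Hg q r G ρ).Rtot (root' M q r ρ) ≤ (q : ℝ≥0∞) * G.Rtot ρ + r := by
  rw [Multigraph.Rtot,
    ← Equiv.sum_comp (ev M q r ρ) (fun u => (Hg q r G ρ).effRes (root' M q r ρ) u),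
    Fintype.sum_sum_type, Fintype.sum_sum_type, Fintype.sum_prod_type]
  have h3 : (∑ _u : Unit, (Hg q r G ρ).effRes (root' M q r ρ) (ev M q r ρ (Sum.inr (Sum.inr _u)))) = 0 := by
    refine Finset.sum_eq_zero fun u _ => ?_
    show (Hg q r G ρ).effRes (root' M q r ρ) (root' M q r ρ) = 0
    rw [Multigraph.effRes, if_pos rfl]
  have h2 : (∑ i : Fin r, (Hg q r G ρ).effRes (root' M q r ρ) (ev M q r ρ (Sum.inr (Sum.inl i)))) ≤ (r : ℝ≥0∞) := by
    calc (∑ i : Fin r, (Hg q r G ρ).effRes (root' M q r ρ) (ev M q r ρ (Sum.inr (Sum.inl i))))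
        ≤ ∑ _i : Fin r, 1 := Finset.sum_le_sum fun i _ => effRes_Hg_pend q r G ρ i
      _ = (r : ℝ≥0∞) := by simp
  have h1 : (∑ j : Fin q, ∑ v : {v : Fin (M+1) // v ≠ ρ},
      (Hg q r G ρ).effRes (root' M q r ρ) (ev M q r ρ (Sum.inl (j, v)))) ≤ (q : ℝ≥0∞) * G.Rtot ρ := by
    have hin : ∀ (j : Fin q) (v : {v : Fin (M+1) // v ≠ ρ}),
        (Hg q r G ρ).effRes (root' M q r ρ) (ev M q r ρ (Sum.inl (j, v))) ≤ G.effRes ρ v.1 := by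
      intro j v
      have : ev M q r ρ (Sum.inl (j, v)) = emb q r ρ j v.1 := by
        rw [emb, dif_neg v.2]
      rw [this]
      exact effRes_Hg_emb q r G ρ j v.1
    calc (∑ j : Fin q, ∑ v : {v : Fin (M+1) // v ≠ ρ},
          (Hg q r G ρ).effRes (root' M q r ρ) (ev M q r ρ (Sum.inl (j, v))))
        ≤ ∑ _j : Fin q, ∑ v : {v : Fin (M+1) // v ≠ ρ}, G.effRes ρ v.1 :=
          Finset.sum_le_sum fun j _ => Finset.sum_le_sum fun v _ => hin j v
      _ ≤ ∑ _j : Fin q, G.Rtot ρ := by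
          refine Finset.sum_le_sum fun j _ => ?_
          rw [Multigraph.Rtot]
          rw [show (∑ v : {v : Fin (M+1) // v ≠ ρ}, G.effRes ρ v.1)
              = ∑ v ∈ Finset.univ.filter (fun v => v ≠ ρ), G.effRes ρ v from
            (Finset.sum_subtype _ (by simp) _).symm]
          exact Finset.sum_le_sum_of_subset (Finset.filter_subset _ _)
      _ = (q : ℝ≥0∞) * G.Rtot ρ := by rw [Finset.sum_const]; simp [nsmul_eq_mul]
  calc _ ≤ (q : ℝ≥0∞) * G.Rtot ρ + ((r : ℝ≥0∞) + 0) := by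
        exact add_le_add h1 (add_le_add h2 (le_of_eq h3))
    _ = (q : ℝ≥0∞) * G.Rtot ρ + r := by rw [add_zero]

end BLimit

namespace BLimit

lemma bFun_le_glue (α : ℝ) (hα : 2 ≤ α) (M q r : ℕ) (G : Multigraph (Fin (M+1)))
    (ρ : Fin (M+1)) (hG : (G.edgeCount : ℝ) ≤ α * (M : ℝ) / 2) :
    bFun (q*M + r) α ≤ ((q : ℝ≥0∞) * G.Rtot ρ + r) / ((q*M + r : ℕ) : ℝ≥0∞) := by
  have hE : (((Hg q r G ρ).edgeCount : ℕ) : ℝ) ≤ α * ((q*M + r : ℕ) : ℝ) / 2 := by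
    rw [edgeCount_Hg]
    push_cast
    have hq : (0:ℝ) ≤ (q:ℝ) := Nat.cast_nonneg q
    have hr : (0:ℝ) ≤ (r:ℝ) := Nat.cast_nonneg r
    nlinarith [mul_le_mul_of_nonneg_left hG hq]
  have h1 : bFun (q*M + r) α ≤ Multigraph.rootedAvg (Hg q r G ρ) (root' M q r ρ) := by
    rw [bFun]
    exact iInf_le
      (fun p : {p : Multigraph (Fin (q*M+r+1)) × Fin (q*M+r+1) //
          ((p.1.edgeCount : ℕ) : ℝ) ≤ α * ((q*M+r : ℕ) : ℝ) / 2} =>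
        Multigraph.rootedAvg p.1.1 p.1.2)
      ⟨(Hg q r G ρ, root' M q r ρ), hE⟩
  refine h1.trans ?_
  rw [Multigraph.rootedAvg]
  have hcard : (Fintype.card (Fin (q*M+r+1)) - 1 : ℕ) = q*M + r := by simp
  rw [hcard]
  exact ENNReal.div_le_div_right (Rtot_Hg_le q r G ρ) _

end BLimit

open BLimit in
theorem stmt2_aux (α : ℝ) (hα : 2 ≤ α) :
    Filter.Tendsto (fun n : ℕ => bFun (n + 1) α) Filter.atTop
      (nhds (⨅ n : ℕ, bFun (n + 1) α)) := by
  refine tendsto_order.2 ⟨?_, ?_⟩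
  · intro a ha
    exact Filter.Eventually.of_forall fun n => lt_of_lt_of_le ha (iInf_le _ n)
  · intro c hc
    obtain ⟨m, hm⟩ := iInf_lt_iff.mp hc
    rw [bFun] at hm
    obtain ⟨⟨⟨G, ρ⟩, hGe⟩, hGA⟩ := iInf_lt_iff.mp hm
    have hGe' : ((G.edgeCount : ℕ) : ℝ) ≤ α * ((m+1 : ℕ) : ℝ) / 2 := hGe
    have hAc : Multigraph.rootedAvg G ρ < c := hGA
    have hM0 : (((m+1:ℕ)) : ℝ≥0∞) ≠ 0 := by simp
    have hRtot : G.Rtot ρ = (((m+1:ℕ)) : ℝ≥0∞) * Multigraph.rootedAvg G ρ := by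
      rw [Multigraph.rootedAvg,
        show (((Fintype.card (Fin (m+1+1)) - 1 : ℕ)) : ℝ≥0∞) = (((m+1:ℕ)):ℝ≥0∞) by simp,
        ENNReal.mul_div_cancel hM0 (ENNReal.natCast_ne_top (m+1))]
    have key : ∀ n : ℕ, bFun (n+1) α
        ≤ Multigraph.rootedAvg G ρ + (((m+1:ℕ)) : ℝ≥0∞) / ((n+1 : ℕ) : ℝ≥0∞) := by
      intro n
      have hqr : (n+1) / (m+1) * (m+1) + (n+1) % (m+1) = n + 1 := by
        rw [mul_comm]; exact Nat.div_add_mod _ _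
      have h1 := bFun_le_glue α hα (m+1) ((n+1)/(m+1)) ((n+1)%(m+1)) G ρ hGe'
      rw [hqr] at h1
      refine h1.trans ?_
      have hn0 : (((n+1:ℕ)) : ℝ≥0∞) ≠ 0 := by simp
      have hnt : (((n+1:ℕ)) : ℝ≥0∞) ≠ ⊤ := ENNReal.natCast_ne_top _
      have hr_le : ((((n+1)%(m+1) : ℕ)) : ℝ≥0∞) ≤ (((m+1:ℕ)) : ℝ≥0∞) := by
        have : (n+1)%(m+1) < m+1 := Nat.mod_lt _ (by omega)
        exact_mod_cast this.le
      have hqM : ((((n+1)/(m+1) : ℕ)) : ℝ≥0∞) * (((m+1:ℕ)):ℝ≥0∞) ≤ (((n+1 : ℕ)) : ℝ≥0∞) := by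
        have h2 : (n+1)/(m+1) * (m+1) ≤ n + 1 := by omega
        exact_mod_cast h2
      calc ((((n+1)/(m+1) : ℕ) : ℝ≥0∞) * G.Rtot ρ + (((n+1)%(m+1) : ℕ) : ℝ≥0∞))
            / ((n+1:ℕ) : ℝ≥0∞)
          ≤ (((n+1:ℕ):ℝ≥0∞) * Multigraph.rootedAvg G ρ + (((m+1:ℕ)):ℝ≥0∞))
            / ((n+1:ℕ) : ℝ≥0∞) := by
            refine ENNReal.div_le_div_right (add_le_add ?_ hr_le) _
            rw [hRtot, ← mul_assoc]
            exact mul_le_mul_left hqM _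
        _ = Multigraph.rootedAvg G ρ + (((m+1:ℕ)):ℝ≥0∞)/((n+1:ℕ):ℝ≥0∞) := by
            rw [ENNReal.add_div, mul_comm, mul_div_assoc,
              ENNReal.div_self hn0 hnt, mul_one]
    have htends : Filter.Tendsto
        (fun n : ℕ => Multigraph.rootedAvg G ρ + (((m+1:ℕ)) : ℝ≥0∞) / ((n+1 : ℕ) : ℝ≥0∞))
        Filter.atTop (nhds (Multigraph.rootedAvg G ρ)) := by
      have h0 : Filter.Tendsto (fun n : ℕ => (((n+1:ℕ)) : ℝ≥0∞)⁻¹) Filter.atTop (nhds 0) :=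
        ENNReal.tendsto_inv_nat_nhds_zero.comp (Filter.tendsto_add_atTop_nat 1)
      have h1 := ENNReal.Tendsto.const_mul h0 (Or.inr (ENNReal.natCast_ne_top (m+1)))
      rw [mul_zero] at h1
      have h2 : Filter.Tendsto (fun n : ℕ => (((m+1:ℕ)) : ℝ≥0∞) / ((n+1 : ℕ) : ℝ≥0∞))
          Filter.atTop (nhds 0) := by
        simpa [div_eq_mul_inv] using h1
      simpa using Filter.Tendsto.const_add (Multigraph.rootedAvg G ρ) h2
    have hev := htends.eventually_lt_const hAc
    filter_upwards [hev] with n h1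
    exact lt_of_le_of_lt (key n) h1

/-- **Lemma (existence of the limit `b(α)`).** For any `α ≥ 2`, `b_n(α)` converges as
`n → ∞` and the limit equals `inf_n b_n(α)`. -/
theorem stmt2 (α : ℝ) (hα : 2 ≤ α) :
    Filter.Tendsto (fun n : ℕ => bFun (n + 1) α) Filter.atTop
      (nhds (⨅ n : ℕ, bFun (n + 1) α)) := stmt2_aux α hα
end

section
/- Let G be a connected rooted graph in B(n,α), i.e. with n non-root vertices and at most αn/2 edges. If R_{xρ}(G) > 1 for some vertex x of G, then there is a rooted graph H ∈ B(n,α) with B(H) < B(G). -/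
open scoped ENNReal

set_option linter.unusedSectionVars false

attribute [local instance 10] Classical.propDecidable

open Multigraph

namespace Aux4

variable {V : Type} [Fintype V] [DecidableEq V]

open Multigraph Finset

lemma netFlow_add (G : Multigraph V) (f g : G.E → ℝ) (v : V) :
    G.netFlow (fun e => f e + g e) v = G.netFlow f v + G.netFlow g v := by
  simp only [Multigraph.netFlow]
  rw [← Finset.sum_add_distrib]
  apply Finset.sum_congr rfl
  intro e _
  split_ifs <;> ring

lemma netFlow_neg (G : Multigraph V) (f : G.E → ℝ) (v : V) :
    G.netFlow (fun e => - f e) v = - G.netFlow f v := by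
  simp only [Multigraph.netFlow]
  rw [← Finset.sum_neg_distrib]
  apply Finset.sum_congr rfl
  intro e _
  split_ifs <;> ring

lemma sum_netFlow (G : Multigraph V) (f : G.E → ℝ) :
    ∑ v : V, G.netFlow f v = 0 := by
  simp only [Multigraph.netFlow]
  rw [Finset.sum_comm]
  apply Finset.sum_eq_zero
  intro e _
  rw [Finset.sum_sub_distrib]
  simp [Finset.sum_ite_eq]

lemma netFlow_sink (G : Multigraph V) {x y : V} {f : G.E → ℝ}
    (hf : G.IsUnitFlow x y f) (hxy : x ≠ y) : G.netFlow f y = -1 := by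
  have h0 := sum_netFlow G f
  have hy : y ∈ (Finset.univ.erase x : Finset V) :=
    Finset.mem_erase.2 ⟨hxy.symm, Finset.mem_univ y⟩
  rw [← Finset.add_sum_erase _ _ (Finset.mem_univ x), ← Finset.add_sum_erase _ _ hy] at h0
  have hrest : ∑ v ∈ (Finset.univ.erase x).erase y, G.netFlow f v = 0 := by
    apply Finset.sum_eq_zero
    intro v hv
    exact hf.2 v (Finset.mem_erase.1 (Finset.mem_erase.1 hv).2).1 (Finset.mem_erase.1 hv).1
  rw [hf.1, hrest] at h0
  linarith

lemma netFlow_single (G : Multigraph V) (e₀ : G.E) (c : ℝ) (v : V) :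
    G.netFlow (fun e => if e = e₀ then c else 0) v =
      (if G.fst e₀ = v then c else 0) - (if G.snd e₀ = v then c else 0) := by
  simp only [Multigraph.netFlow]
  rw [Finset.sum_eq_single e₀]
  · simp
  · intro e _ he
    simp [he]
  · simp

lemma edge_flow (G : Multigraph V) (a b : V) (e₀ : G.E)
    (h : (G.fst e₀ = a ∧ G.snd e₀ = b) ∨ (G.fst e₀ = b ∧ G.snd e₀ = a)) (hab : a ≠ b) :
    G.IsUnitFlow a b (fun e => if e = e₀ then (if G.fst e₀ = a then 1 else -1) else 0) := by
  rcases h with ⟨h1, h2⟩ | ⟨h1, h2⟩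
  · constructor
    · rw [netFlow_single, h1, h2]
      simp [Ne.symm hab]
    · intro v hva hvb
      rw [netFlow_single, h1, h2]
      simp [Ne.symm hva, Ne.symm hvb]
  · constructor
    · rw [netFlow_single, h1, h2]
      simp [Ne.symm hab]
    · intro v hva hvb
      rw [netFlow_single, h1, h2]
      simp [Ne.symm hva, Ne.symm hvb]

lemma effRes_le_one_of_edge (G : Multigraph V) (a b : V) (e₀ : G.E)
    (h : (G.fst e₀ = a ∧ G.snd e₀ = b) ∨ (G.fst e₀ = b ∧ G.snd e₀ = a)) (hab : a ≠ b) :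
    G.effRes a b ≤ 1 := by
  rw [Multigraph.effRes, if_neg hab]
  refine le_trans (iInf_le _ ⟨_, edge_flow G a b e₀ h hab⟩) ?_
  have hE : ∑ e : G.E, ((if e = e₀ then (if G.fst e₀ = a then (1:ℝ) else -1) else 0) : ℝ) ^ 2
      = (if G.fst e₀ = a then (1:ℝ) else -1) ^ 2 := by
    rw [Finset.sum_eq_single e₀]
    · simp
    · intro e _ he; simp [he]
    · simp
  rw [hE]
  have h1 : ((if G.fst e₀ = a then (1:ℝ) else -1)) ^ 2 = 1 := by split_ifs <;> ring
  rw [h1]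
  simp

lemma unitFlow_trans (G : Multigraph V) {u b c : V} {f g : G.E → ℝ}
    (hf : G.IsUnitFlow u b f) (hg : G.IsUnitFlow b c g)
    (hub : u ≠ b) (huc : u ≠ c) :
    G.IsUnitFlow u c (fun e => f e + g e) := by
  constructor
  · rw [netFlow_add, hf.1]
    by_cases hbc : b = c
    · subst hbc
      rw [hg.2 u hub hub]; norm_num
    · rw [hg.2 u hub huc]; ring
  · intro v hvu hvc
    rw [netFlow_add]
    by_cases hvb : v = b
    · subst hvb
      rw [netFlow_sink G hf hub, hg.1]; ring
    · rw [hf.2 v hvu hvb, hg.2 v hvb hvc]; ring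

lemma exists_unitFlow (G : Multigraph V) {u v : V}
    (h : Relation.ReflTransGen G.Adj u v) : u ≠ v → ∃ f, G.IsUnitFlow u v f := by
  induction h with
  | refl => intro h; exact absurd rfl h
  | @tail b c hab hbc ih =>
    intro huc
    by_cases hbc' : b = c
    · subst hbc'
      exact ih huc
    · by_cases hub : u = b
      · subst hub
        obtain ⟨e, he⟩ := hbc
        exact ⟨_, edge_flow G u c e he huc⟩
      · obtain ⟨f, hf⟩ := ih hub
        obtain ⟨e, he⟩ := hbc
        exact ⟨_, unitFlow_trans G hf (edge_flow G b c e he hbc') hub huc⟩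

lemma effRes_lt_top (G : Multigraph V) {u v : V}
    (h : Relation.ReflTransGen G.Adj u v) : G.effRes u v < ⊤ := by
  by_cases huv : u = v
  · simp [Multigraph.effRes, huv]
  · obtain ⟨f, hf⟩ := exists_unitFlow G h huv
    rw [Multigraph.effRes, if_neg huv]
    exact lt_of_le_of_lt (iInf_le _ ⟨f, hf⟩) ENNReal.ofReal_lt_top

lemma effRes_symm_le (G : Multigraph V) (a b : V) : G.effRes a b ≤ G.effRes b a := by
  by_cases hab : a = b
  · simp [Multigraph.effRes, hab]
  · rw [Multigraph.effRes, Multigraph.effRes, if_neg hab, if_neg (Ne.symm hab)]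
    refine le_iInf ?_
    rintro ⟨f, hf⟩
    have hneg : G.IsUnitFlow a b (fun e => - f e) := by
      constructor
      · rw [netFlow_neg, netFlow_sink G hf (Ne.symm hab)]; ring
      · intro w hwa hwb
        rw [netFlow_neg, hf.2 w hwb hwa]; ring
    refine le_trans (iInf_le _ ⟨fun e => - f e, hneg⟩) ?_
    simp

/-- The contracted graph: merge `x` into `z`, and reattach `e₀` as a
pendant edge from `ρ` to `x`. -/
noncomputable def contractH (G : Multigraph V) (ρ x z : V) (e₀ : G.E) : Multigraph V where
  E := G.E
  fst := fun e => if e = e₀ then ρ else (if G.fst e = x then z else G.fst e)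
  snd := fun e => if e = e₀ then x else (if G.snd e = x then z else G.snd e)

attribute [reducible] contractH

lemma contractH_fst (G : Multigraph V) (ρ x z : V) (e₀ e : G.E) :
    (contractH G ρ x z e₀).fst e
      = if e = e₀ then ρ else (if G.fst e = x then z else G.fst e) := rfl

lemma contractH_snd (G : Multigraph V) (ρ x z : V) (e₀ e : G.E) :
    (contractH G ρ x z e₀).snd e
      = if e = e₀ then x else (if G.snd e = x then z else G.snd e) := rfl

lemma contractH_edgeCount (G : Multigraph V) (ρ x z : V) (e₀ : G.E) :
    (contractH G ρ x z e₀).edgeCount = G.edgeCount := rfl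

lemma contractH_mono (G : Multigraph V) (ρ x z : V) (e₀ : G.E)
    (hxρ : x ≠ ρ) (hzρ : z ≠ ρ) (hxz : x ≠ z)
    (he : (G.fst e₀ = x ∧ G.snd e₀ = z) ∨ (G.fst e₀ = z ∧ G.snd e₀ = x)) :
    ∀ y, y ≠ x → (contractH G ρ x z e₀).effRes ρ y ≤ G.effRes ρ y := by
  intro y hyx
  by_cases hρy : ρ = y
  · simp [Multigraph.effRes, hρy]
  · rw [Multigraph.effRes, Multigraph.effRes, if_neg hρy, if_neg hρy]
    refine le_iInf ?_
    rintro ⟨f, hf⟩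
    have hfste : G.fst e₀ ≠ ρ := by
      rcases he with ⟨h1, _⟩ | ⟨h1, _⟩ <;> rw [h1] <;> assumption
    have hsnde : G.snd e₀ ≠ ρ := by
      rcases he with ⟨_, h2⟩ | ⟨_, h2⟩ <;> rw [h2] <;> assumption
    have hφ : ∀ (u w : V), w ≠ z → w ≠ x → ((if u = x then z else u) = w ↔ u = w) := by
      intro u w hwz hwx
      split_ifs with h
      · subst h; simp [Ne.symm hwz, Ne.symm hwx]
      · rfl
    have key : (contractH G ρ x z e₀).IsUnitFlow ρ y
        (fun e => if e = e₀ then 0 else f e) := by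
      constructor
      · have heq : (contractH G ρ x z e₀).netFlow (fun e => if e = e₀ then 0 else f e) ρ
            = G.netFlow f ρ := by
          simp only [Multigraph.netFlow]
          apply Finset.sum_congr rfl
          intro e _
          change G.E at e
          by_cases he' : e = e₀
          · rw [he']
            simp only [contractH_fst, contractH_snd, if_pos rfl]
            rw [if_neg hfste, if_neg hsnde]
            simp
          · simp only [contractH_fst, contractH_snd, if_neg he']
            rw [if_congr (hφ (G.fst e) ρ (Ne.symm hzρ) (Ne.symm hxρ)) rfl rfl,
              if_congr (hφ (G.snd e) ρ (Ne.symm hzρ) (Ne.symm hxρ)) rfl rfl]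
        rw [heq, hf.1]
      · intro v hvρ hvy
        by_cases hvx : v = x
        · simp only [Multigraph.netFlow]
          apply Finset.sum_eq_zero
          intro e _
          change G.E at e
          by_cases he' : e = e₀
          · rw [he']
            simp only [contractH_fst, contractH_snd, if_pos rfl]
            simp
          · simp only [contractH_fst, contractH_snd, if_neg he']
            have h1 : (if G.fst e = x then z else G.fst e) ≠ v := by
              split_ifs with h
              · exact fun hh => (Ne.symm hxz) (hh.trans hvx)
              · exact fun hh => h (hh.trans hvx)
            have h2 : (if G.snd e = x then z else G.snd e) ≠ v := by
              split_ifs with h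
              · exact fun hh => (Ne.symm hxz) (hh.trans hvx)
              · exact fun hh => h (hh.trans hvx)
            rw [if_neg h1, if_neg h2]
            ring
        · by_cases hvz : v = z
          · have hxv : ¬ (x = v) := fun h => hxz (h.trans hvz)
            have heq : (contractH G ρ x z e₀).netFlow (fun e => if e = e₀ then 0 else f e) v
                = G.netFlow f v + G.netFlow f x := by
              simp only [Multigraph.netFlow]
              rw [← Finset.sum_add_distrib]
              apply Finset.sum_congr rfl
              intro e _
              change G.E at e
              by_cases he' : e = e₀
              · rw [he']
                simp only [contractH_fst, contractH_snd, if_pos rfl]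
                rcases he with ⟨h1, h2⟩ | ⟨h1, h2⟩ <;> rw [h1, h2, ← hvz] <;>
                  simp [hxv, hvx]
              · simp only [contractH_fst, contractH_snd, if_neg he']
                have hsplit : ∀ u : V, ((if (if u = x then z else u) = v then f e else 0) : ℝ)
                    = (if u = v then f e else 0) + (if u = x then f e else 0) := by
                  intro u
                  by_cases h : u = x
                  · simp [h, ← hvz, hxv]
                  · simp [h]
                rw [hsplit (G.fst e), hsplit (G.snd e)]
                ring
            rw [heq, hf.2 v hvρ hvy, hf.2 x hxρ (Ne.symm hyx)]
            ring
          · have heq : (contractH G ρ x z e₀).netFlow (fun e => if e = e₀ then 0 else f e) v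
                = G.netFlow f v := by
              simp only [Multigraph.netFlow]
              apply Finset.sum_congr rfl
              intro e _
              change G.E at e
              by_cases he' : e = e₀
              · rw [he']
                have hfv : G.fst e₀ ≠ v := by
                  rcases he with ⟨h1, _⟩ | ⟨h1, _⟩ <;> rw [h1]
                  · exact fun h => hvx h.symm
                  · exact fun h => hvz h.symm
                have hsv : G.snd e₀ ≠ v := by
                  rcases he with ⟨_, h2⟩ | ⟨_, h2⟩ <;> rw [h2]
                  · exact fun h => hvz h.symm
                  · exact fun h => hvx h.symm
                simp [contractH_fst, contractH_snd, hfv, hsv, Ne.symm hvρ,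
                  show x ≠ v from fun h => hvx h.symm]
              · simp only [contractH_fst, contractH_snd, if_neg he']
                rw [if_congr (hφ (G.fst e) v (fun h => hvz h) (fun h => hvx h)) rfl rfl,
                  if_congr (hφ (G.snd e) v (fun h => hvz h) (fun h => hvx h)) rfl rfl]
            rw [heq, hf.2 v hvρ hvy]
    refine le_trans (iInf_le _ ⟨fun e => if e = e₀ then 0 else f e, key⟩) ?_
    apply ENNReal.ofReal_le_ofReal
    apply Finset.sum_le_sum
    intro e _
    change G.E at e
    by_cases he' : e = e₀
    · simp [he']
      positivity
    · simp [he']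

end Aux4
/-- **Lemma (contracting a high-resistance vertex).** If `G` is a connected rooted graph
with `n` non-root vertices and at most `αn/2` edges and some vertex `x` has
`R_{xρ}(G) > 1`, then there is a rooted graph `H` in the same class with `B(H) < B(G)`. -/
theorem stmt4 (n : ℕ) (α : ℝ) (G : Multigraph (Fin (n + 1))) (ρ : Fin (n + 1))
    (hconn : G.Connected) (hm : (G.edgeCount : ℝ) ≤ α * n / 2)
    (x : Fin (n + 1)) (hx : 1 < G.effRes x ρ) :
    ∃ (H : Multigraph (Fin (n + 1))) (σ : Fin (n + 1)),
      (H.edgeCount : ℝ) ≤ α * n / 2 ∧ rootedAvg H σ < rootedAvg G ρ := by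
  have hxρ : x ≠ ρ := by
    rintro rfl
    rw [Multigraph.effRes, if_pos rfl] at hx
    exact absurd hx (by simp)
  have hedge : ∃ (e₀ : G.E) (z : Fin (n+1)), z ≠ x ∧
      ((G.fst e₀ = x ∧ G.snd e₀ = z) ∨ (G.fst e₀ = z ∧ G.snd e₀ = x)) := by
    by_contra hno
    push_neg at hno
    have hstay : ∀ w, Relation.ReflTransGen G.Adj x w → w = x := by
      intro w hw
      induction hw with
      | refl => rfl
      | @tail b c hab hbc ih =>
        by_contra hcx
        rw [ih] at hbc
        obtain ⟨e, hor⟩ := hbc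
        rcases hor with ⟨ha, hb⟩ | ⟨ha, hb⟩
        · exact (hno e c hcx).1 ha hb
        · exact (hno e c hcx).2 ha hb
    exact hxρ (hstay ρ (hconn x ρ)).symm
  obtain ⟨e₀, z, hzx, he⟩ := hedge
  have hxz : x ≠ z := Ne.symm hzx
  have hzρ : z ≠ ρ := fun hzeq =>
    absurd hx (not_lt.2 (Aux4.effRes_le_one_of_edge G x ρ e₀ (hzeq ▸ he) hxρ))
  refine ⟨Aux4.contractH G ρ x z e₀, ρ, ?_, ?_⟩
  · rw [Aux4.contractH_edgeCount]
    exact hm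
  · have hn0 : n ≠ 0 := by
      rintro rfl
      have h1 := x.isLt
      have h2 := ρ.isLt
      exact hxρ (Fin.ext (by omega))
    have hHx : (Aux4.contractH G ρ x z e₀).effRes ρ x ≤ 1 := by
      refine Aux4.effRes_le_one_of_edge _ ρ x e₀ (Or.inl ⟨?_, ?_⟩) (Ne.symm hxρ)
      · simp [Aux4.contractH_fst]
      · simp [Aux4.contractH_snd]
    have hGx : 1 < G.effRes ρ x := lt_of_lt_of_le hx (Aux4.effRes_symm_le G x ρ)
    have hmono := Aux4.contractH_mono G ρ x z e₀ hxρ hzρ hxz he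
    have hS : (∑ y ∈ Finset.univ.erase x, G.effRes ρ y) ≠ ⊤ := by
      rw [← lt_top_iff_ne_top]
      exact ENNReal.sum_lt_top.2 fun y _ => Aux4.effRes_lt_top G (hconn ρ y)
    have hRtH : (Aux4.contractH G ρ x z e₀).Rtot ρ < G.Rtot ρ := by
      rw [Multigraph.Rtot, Multigraph.Rtot,
        ← Finset.add_sum_erase _ _ (Finset.mem_univ x),
        ← Finset.add_sum_erase _ (fun y => G.effRes ρ y) (Finset.mem_univ x)]
      calc (Aux4.contractH G ρ x z e₀).effRes ρ x
            + ∑ y ∈ Finset.univ.erase x, (Aux4.contractH G ρ x z e₀).effRes ρ y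
          ≤ 1 + ∑ y ∈ Finset.univ.erase x, G.effRes ρ y :=
            add_le_add hHx (Finset.sum_le_sum fun y hy => hmono y (Finset.ne_of_mem_erase hy))
        _ < G.effRes ρ x + ∑ y ∈ Finset.univ.erase x, G.effRes ρ y :=
            ENNReal.add_lt_add_right hS hGx
    rw [Multigraph.rootedAvg, Multigraph.rootedAvg]
    have hcard : ((Fintype.card (Fin (n+1)) - 1 : ℕ) : ℝ≥0∞) = (n : ℝ≥0∞) := by simp
    rw [hcard]
    rw [div_eq_mul_inv, div_eq_mul_inv]
    refine ENNReal.mul_lt_mul_left ?_ ?_ hRtH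
    · exact ENNReal.inv_ne_zero.2 (ENNReal.natCast_ne_top n)
    · exact ENNReal.inv_ne_top.2 (by exact_mod_cast hn0)
end

section
/- For every real α with 2 ≤ α ≤ 3, b(α) ≤ (5 − α)/3. -/
open scoped ENNReal

set_option linter.unusedSectionVars false

attribute [local instance 10] Classical.propDecidable

open Multigraph

-- AUX START
section Aux
variable {V : Type} [Fintype V] [DecidableEq V]

lemma effRes_le_of_flow (G : Multigraph V) (x y : V) (hxy : x ≠ y) (f : G.E → ℝ)
    (hf : G.IsUnitFlow x y f) : G.effRes x y ≤ ENNReal.ofReal (∑ e : G.E, (f e) ^ 2) := by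
  rw [effRes, if_neg hxy]
  exact iInf_le (fun g : {g : G.E → ℝ // G.IsUnitFlow x y g} =>
    ENNReal.ofReal (∑ e : G.E, (g.1 e) ^ 2)) ⟨f, hf⟩

lemma sum_two {ι : Type*} [Fintype ι] [DecidableEq ι] (u w : ι) (h : u ≠ w) (a b : ℝ) :
    ∑ i : ι, (if i = u then a else if i = w then b else 0) = a + b := by
  have : (fun i => if i = u then a else if i = w then b else 0)
      = fun i => (if i = u then a else 0) + (if i = w then b else 0) := by
    funext i
    split_ifs with h1 h2 <;> simp_all
  rw [this, Finset.sum_add_distrib]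
  simp

end Aux

section Star
variable (N m : ℕ)

def pa (hm : 2 * m ≤ N) (j : Fin m) : Fin N := ⟨2*j.1, by have := j.2; omega⟩
def pb (hm : 2 * m ≤ N) (j : Fin m) : Fin N := ⟨2*j.1+1, by have := j.2; omega⟩

noncomputable def starGraph (hm : 2 * m ≤ N) : Multigraph (Fin (N+1)) where
  E := Fin N ⊕ Fin m
  fst := Sum.elim (fun _ => Fin.last N) (fun j => (pa N m hm j).castSucc)
  snd := Sum.elim (fun i => i.castSucc) (fun j => (pb N m hm j).castSucc)

lemma star_sum' (hm : 2 * m ≤ N) (g : (starGraph N m hm).E → ℝ) :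
    ∑ e, g e = ∑ i : Fin N, g (Sum.inl i) + ∑ j : Fin m, g (Sum.inr j) := Fintype.sum_sum_type g

lemma star_netFlow_last (hm : 2 * m ≤ N) (f : Fin N ⊕ Fin m → ℝ) :
    (starGraph N m hm).netFlow f (Fin.last N) = ∑ i : Fin N, f (.inl i) := by
  simp only [netFlow]
  rw [star_sum']
  simp [netFlow, starGraph, Fintype.sum_sum_type, (Fin.castSucc_lt_last _).ne]

lemma star_netFlow_castSucc (hm : 2 * m ≤ N) (f : Fin N ⊕ Fin m → ℝ) (k : Fin N) :
    (starGraph N m hm).netFlow f k.castSucc =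
      -(f (.inl k)) + ∑ j : Fin m, ((if pa N m hm j = k then f (.inr j) else 0)
        - (if pb N m hm j = k then f (.inr j) else 0)) := by
  simp only [netFlow]
  rw [star_sum']
  simp [netFlow, starGraph, Fintype.sum_sum_type, (Fin.castSucc_lt_last _).ne',
    Fin.castSucc_inj, Finset.sum_sub_distrib, Finset.sum_ite_eq']

end Star

lemma pa_ne_pb (hm : 2 * m ≤ N) (j j' : Fin m) : pa N m hm j ≠ pb N m hm j' := by
  intro h
  have := congrArg Fin.val h
  simp [pa, pb] at this
  omega

lemma star_effRes_le_one (hm : 2 * m ≤ N) (x : Fin N) :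
    (starGraph N m hm).effRes (Fin.last N) x.castSucc ≤ 1 := by
  have hne : (Fin.last N) ≠ x.castSucc := (Fin.castSucc_lt_last x).ne'
  set f : Fin N ⊕ Fin m → ℝ := Sum.elim (fun i => if i = x then 1 else 0) (fun _ => 0) with hf
  have hflow : (starGraph N m hm).IsUnitFlow (Fin.last N) x.castSucc f := by
    constructor
    · rw [star_netFlow_last]; simp [f]
    · intro v hv1 hv2
      induction v using Fin.lastCases with
      | last => exact absurd rfl hv1
      | cast k =>
        rw [star_netFlow_castSucc]
        have hk : k ≠ x := fun h => hv2 (by rw [h])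
        simp [f, hk]
  calc (starGraph N m hm).effRes (Fin.last N) x.castSucc
      ≤ ENNReal.ofReal (∑ e : (starGraph N m hm).E, (f e) ^ 2) :=
        effRes_le_of_flow (starGraph N m hm) _ _ hne f hflow
    _ = 1 := by
        have h1 : ∀ i : Fin N, ((if i = x then (1:ℝ) else 0))^2
            = if i = x then (1:ℝ) else 0 := by intro i; split_ifs <;> norm_num
        rw [star_sum']
        simp only [starGraph, Fintype.sum_sum_type, Sum.elim_inl, Sum.elim_inr, f, h1]
        simp

lemma star_sum_inr (hm : 2 * m ≤ N) (j : Fin m) (k : Fin N) (c : ℝ) :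
    ∑ j' : Fin m, ((if pa N m hm j' = k then (if j' = j then c else 0) else 0)
      - (if pb N m hm j' = k then (if j' = j then c else 0) else 0))
    = (if pa N m hm j = k then c else 0) - (if pb N m hm j = k then c else 0) := by
  have h : ∀ j' : Fin m, ((if pa N m hm j' = k then (if j' = j then c else 0) else 0)
      - (if pb N m hm j' = k then (if j' = j then c else 0) else 0))
      = if j' = j then ((if pa N m hm j = k then c else 0)
          - (if pb N m hm j = k then c else 0)) else 0 := by
    intro j'
    by_cases hj : j' = j
    · subst hj; simp
    · simp [hj]
  rw [Finset.sum_congr rfl fun j' _ => h j', Finset.sum_ite_eq' Finset.univ j]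
  simp

lemma star_effRes_pair_le (hm : 2 * m ≤ N) (j : Fin m) (x : Fin N)
    (hx : x = pa N m hm j ∨ x = pb N m hm j) :
    (starGraph N m hm).effRes (Fin.last N) x.castSucc ≤ ENNReal.ofReal (2/3) := by
  have hne : (Fin.last N) ≠ x.castSucc := (Fin.castSucc_lt_last x).ne'
  have hab : pa N m hm j ≠ pb N m hm j := pa_ne_pb hm j j
  -- the partner of x and the sign of the pair-edge flow
  obtain ⟨w, s, hxw, hset, hsign⟩ : ∃ w s, x ≠ w ∧
      ((pa N m hm j = x ∨ pa N m hm j = w) ∧ (pb N m hm j = x ∨ pb N m hm j = w)) ∧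
      ((if pa N m hm j = w then s else 0) - (if pb N m hm j = w then s else 0) = (1/3:ℝ)
      ∧ s^2 = 1/9) := by
    rcases hx with h | h
    · exact ⟨pb N m hm j, -(1/3), by rw [h]; exact hab,
        ⟨Or.inl h.symm, Or.inr rfl⟩,
        by norm_num [hab], by norm_num⟩
    · exact ⟨pa N m hm j, 1/3, by rw [h]; exact hab.symm,
        ⟨Or.inr rfl, Or.inl h.symm⟩,
        by norm_num [hab.symm], by norm_num⟩
  set f : Fin N ⊕ Fin m → ℝ :=
    Sum.elim (fun i => if i = x then 2/3 else if i = w then 1/3 else 0)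
      (fun j' => if j' = j then s else 0) with hf
  have hflow : (starGraph N m hm).IsUnitFlow (Fin.last N) x.castSucc f := by
    constructor
    · rw [star_netFlow_last]
      simp only [f, Sum.elim_inl]
      rw [sum_two x w hxw]
      norm_num
    · intro v hv1 hv2
      induction v using Fin.lastCases with
      | last => exact absurd rfl hv1
      | cast k =>
        rw [star_netFlow_castSucc]
        have hk : k ≠ x := fun h => hv2 (by rw [h])
        simp only [f, Sum.elim_inl, Sum.elim_inr]
        rw [star_sum_inr]
        by_cases hkw : k = w
        · subst hkw
          rw [if_neg hk, if_pos rfl, hsign.1]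
          norm_num
        · have h1 : pa N m hm j ≠ k := by
            rcases hset.1 with h | h
            · rw [h]; exact Ne.symm hk
            · rw [h]; exact Ne.symm hkw
          have h2 : pb N m hm j ≠ k := by
            rcases hset.2 with h | h
            · rw [h]; exact Ne.symm hk
            · rw [h]; exact Ne.symm hkw
          rw [if_neg hk, if_neg hkw, if_neg h1, if_neg h2]
          ring
  refine le_trans (effRes_le_of_flow (starGraph N m hm) _ _ hne f hflow) ?_
  have hE : (∑ e : (starGraph N m hm).E, f e ^ 2) = 2/3 := by
    have hEq : ∀ i : Fin N, ((if i = x then (2:ℝ)/3 else if i = w then 1/3 else 0))^2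
        = if i = x then (4:ℝ)/9 else if i = w then 1/9 else 0 := fun i => by
      split_ifs <;> norm_num
    have hEq2 : ∀ j' : Fin m, ((if j' = j then s else 0))^2 = if j' = j then s^2 else 0 :=
      fun j' => by split_ifs <;> norm_num
    rw [star_sum']
    simp only [starGraph, Fintype.sum_sum_type, f, Sum.elim_inl, Sum.elim_inr, hEq, hEq2]
    rw [sum_two x w hxw, Finset.sum_ite_eq' Finset.univ j, hsign.2]
    simp only [Finset.mem_univ, if_true]
    norm_num
  rw [hE]

lemma star_filter_card (hm : 2 * m ≤ N) :
    (Finset.univ.filter fun k : Fin N => (k : ℕ) < 2*m).card = 2*m := by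
  rw [show (Finset.univ.filter fun k : Fin N => (k : ℕ) < 2*m)
      = Finset.univ.map (Fin.castLEEmb hm) from ?_]
  · simp
  · ext k
    simp only [Finset.mem_filter, Finset.mem_univ, true_and, Finset.mem_map]
    constructor
    · intro h
      exact ⟨⟨(k : ℕ), h⟩, by ext; simp⟩
    · rintro ⟨a, -, rfl⟩
      exact a.2

lemma star_Rtot_le (hm : 2 * m ≤ N) :
    (starGraph N m hm).Rtot (Fin.last N)
      ≤ (2*m : ℕ) * ENNReal.ofReal (2/3) + ((N - 2*m : ℕ) : ℝ≥0∞) := by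
  rw [Rtot, Fin.sum_univ_castSucc]
  have hlast : (starGraph N m hm).effRes (Fin.last N) (Fin.last N) = 0 := by
    rw [effRes, if_pos rfl]
  rw [hlast, add_zero]
  have hbd : ∀ k : Fin N, (starGraph N m hm).effRes (Fin.last N) k.castSucc
      ≤ if (k : ℕ) < 2*m then ENNReal.ofReal (2/3) else 1 := by
    intro k
    by_cases hk : (k : ℕ) < 2*m
    · rw [if_pos hk]
      set j : Fin m := ⟨(k : ℕ)/2, by omega⟩ with hj
      refine star_effRes_pair_le hm j k ?_
      rcases Nat.even_or_odd (k : ℕ) with he | ho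
      · left; ext; rcases he with ⟨c, hc⟩; simp [pa, j]; omega
      · right; ext; simp [pb, j]; rcases ho with ⟨c, hc⟩; omega
    · rw [if_neg hk]
      exact star_effRes_le_one hm k
  refine le_trans (Finset.sum_le_sum fun k _ => hbd k) ?_
  rw [Finset.sum_ite, Finset.sum_const, Finset.sum_const]
  have h1 : (Finset.univ.filter fun k : Fin N => (k : ℕ) < 2*m).card = 2*m :=
    star_filter_card hm
  have h2 : (Finset.univ.filter fun k : Fin N => ¬ (k : ℕ) < 2*m).card = N - 2*m := by
    have := Finset.card_filter_add_card_filter_not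
      (s := (Finset.univ : Finset (Fin N))) (p := fun k : Fin N => (k : ℕ) < 2*m)
    simp only [Finset.card_univ, Fintype.card_fin] at this
    omega
  rw [h1, h2]
  simp [nsmul_eq_mul]

lemma star_rootedAvg_le (hm : 2 * m ≤ N) (hN : 0 < N) :
    rootedAvg (starGraph N m hm) (Fin.last N)
      ≤ ENNReal.ofReal (((N : ℝ) - 2*m/3) / N) := by
  have hmr : (2*m : ℝ) ≤ (N : ℝ) := by exact_mod_cast hm
  have hnum : (0:ℝ) ≤ (N : ℝ) - 2*m/3 := by linarith
  rw [rootedAvg]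
  have hcard : ((Fintype.card (Fin (N+1)) - 1 : ℕ) : ℝ≥0∞) = ((N : ℕ) : ℝ≥0∞) := by simp
  rw [hcard]
  have h1 : ((2*m : ℕ) : ℝ≥0∞) * ENNReal.ofReal (2/3) + ((N - 2*m : ℕ) : ℝ≥0∞)
      = ENNReal.ofReal ((N : ℝ) - 2*m/3) := by
    rw [← ENNReal.ofReal_natCast (2*m), ← ENNReal.ofReal_natCast (N - 2*m),
      ← ENNReal.ofReal_mul (by positivity),
      ← ENNReal.ofReal_add (by positivity) (by positivity)]
    congr 1
    rw [Nat.cast_sub hm]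
    push_cast
    ring
  refine le_trans (ENNReal.div_le_div_right (star_Rtot_le hm) _) ?_
  rw [h1, ← ENNReal.ofReal_natCast N,
    ← ENNReal.ofReal_div_of_pos (by exact_mod_cast hN)]


/-- **Lemma (stars of edges and triangles).** For `α ∈ [2,3]`, `b(α) ≤ (5 - α)/3`. -/
theorem stmt7 (α : ℝ) (h2 : 2 ≤ α) (h3 : α ≤ 3) (L : ℝ≥0∞)
    (hL : Filter.Tendsto (fun n : ℕ => bFun (n + 1) α) Filter.atTop (nhds L)) :
    L ≤ ENNReal.ofReal ((5 - α) / 3) := by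
  have key : ∀ n : ℕ, bFun (n+1) α ≤ ENNReal.ofReal ((5-α)/3 + 2/(3*((n:ℝ)+1))) := by
    intro n
    set N := n + 1 with hNdef
    have hN : 0 < N := Nat.succ_pos n
    have hNr : (0:ℝ) < (N : ℝ) := by exact_mod_cast hN
    set m := ⌊(α-2)*(N:ℝ)/2⌋₊ with hmdef
    have ha2 : (0:ℝ) ≤ α - 2 := by linarith
    have hx0 : (0:ℝ) ≤ (α-2)*(N:ℝ)/2 := by positivity
    have hfl : (m : ℝ) ≤ (α-2)*(N:ℝ)/2 := Nat.floor_le hx0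
    have hfl2 : (α-2)*(N:ℝ)/2 < (m : ℝ) + 1 := Nat.lt_floor_add_one _
    have hNcast : ((N : ℕ) : ℝ) = (n : ℝ) + 1 := by rw [hNdef]; push_cast; ring
    have hm : 2*m ≤ N := by
      have h2m : ((2*m : ℕ) : ℝ) ≤ ((N : ℕ) : ℝ) := by
        push_cast
        nlinarith [mul_nonneg (by linarith : (0:ℝ) ≤ 3 - α) hNr.le]
      exact_mod_cast h2m
    have hedge : (((starGraph N m hm).edgeCount : ℝ)) ≤ α * (N : ℝ) / 2 := by
      have hE : (starGraph N m hm).edgeCount = N + m := by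
        rw [Multigraph.edgeCount]
        exact Fintype.card_sum.trans (by simp)
      rw [hE, Nat.cast_add]
      linarith
    have hb : bFun N α ≤ rootedAvg (starGraph N m hm) (Fin.last N) :=
      iInf_le (fun G : {p : Multigraph (Fin (N + 1)) × Fin (N + 1) //
          (p.1.edgeCount : ℝ) ≤ α * (N : ℕ) / 2} => rootedAvg G.1.1 G.1.2)
        ⟨(starGraph N m hm, Fin.last N), hedge⟩
    refine le_trans hb (le_trans (star_rootedAvg_le hm hN) ?_)
    apply ENNReal.ofReal_le_ofReal
    rw [div_le_iff₀ hNr, ← hNcast]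
    have hexp : ((5-α)/3 + 2/(3*((N:ℕ):ℝ))) * ((N:ℕ):ℝ) = (5-α)*((N:ℕ):ℝ)/3 + 2/3 := by
      field_simp
    rw [hexp]
    linarith
  have hg : Filter.Tendsto (fun n : ℕ => ENNReal.ofReal ((5-α)/3 + 2/(3*((n:ℝ)+1))))
      Filter.atTop (nhds (ENNReal.ofReal ((5-α)/3))) := by
    have h0 : Filter.Tendsto (fun n : ℕ => 2/(3*((n:ℝ)+1))) Filter.atTop (nhds 0) := by
      have h1 := tendsto_one_div_add_atTop_nhds_zero_nat.const_mul (2/3 : ℝ)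
      rw [mul_zero] at h1
      convert h1 using 2 with n
      field_simp
    have h2' : Filter.Tendsto (fun n : ℕ => (5-α)/3 + 2/(3*((n:ℝ)+1)))
        Filter.atTop (nhds ((5-α)/3)) := by
      simpa using (tendsto_const_nhds (x := (5-α)/3) (f := Filter.atTop (α := ℕ))).add h0
    exact (ENNReal.continuous_ofReal.tendsto _).comp h2'
  exact le_of_tendsto_of_tendsto' hL hg key
end

section
/- For every real α ≥ 2, b(α) ≥ 1/(α − 1). -/
open scoped ENNReal

set_option linter.unusedSectionVars false

attribute [local instance 10] Classical.propDecidable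

open Multigraph

/-! ### Auxiliary development for the lower bound -/

section LowerBoundAux

open Finset

variable {V : Type} [Fintype V] [DecidableEq V]

/-- `e` joins `u` and `v`. -/
def Joins (G : Multigraph V) (e : G.E) (u v : V) : Prop :=
  (G.fst e = u ∧ G.snd e = v) ∨ (G.fst e = v ∧ G.snd e = u)

/-- The number of edges joining `u` and `v`, as a real number. -/
noncomputable def mmR (G : Multigraph V) (u v : V) : ℝ :=
  ((Finset.univ.filter fun e : G.E => Joins G e u v).card : ℝ)

/-- The degree of `v`, as a real number. -/
noncomputable def ddR (G : Multigraph V) (v : V) : ℝ := (G.degree v : ℝ)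

lemma mmR_nonneg (G : Multigraph V) (u v : V) : 0 ≤ mmR G u v := Nat.cast_nonneg _

lemma ddR_nonneg (G : Multigraph V) (v : V) : 0 ≤ ddR G v := Nat.cast_nonneg _

lemma mmR_eq_sum (G : Multigraph V) (u v : V) :
    mmR G u v = ∑ e : G.E, if Joins G e u v then (1:ℝ) else 0 := by
  rw [mmR, Finset.card_filter]
  push_cast
  rfl

lemma ddR_eq_sum (G : Multigraph V) (v : V) :
    ddR G v = ∑ e : G.E,
      ((if G.fst e = v then (1:ℝ) else 0) + (if G.snd e = v then (1:ℝ) else 0)) := by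
  rw [ddR, Multigraph.degree, Finset.sum_add_distrib, Finset.card_filter, Finset.card_filter]
  push_cast
  rfl

lemma sum_mmR_le (G : Multigraph V) (a : V) :
    ∑ u ∈ Finset.univ.erase a, mmR G u a ≤ ddR G a := by
  simp only [mmR_eq_sum]
  rw [Finset.sum_comm, ddR_eq_sum]
  refine Finset.sum_le_sum fun e _ => ?_
  calc ∑ u ∈ Finset.univ.erase a, (if Joins G e u a then (1:ℝ) else 0)
      ≤ ∑ u : V, ((if G.fst e = a then (1:ℝ) else 0) * (if u = G.snd e then (1:ℝ) else 0)
          + (if G.snd e = a then (1:ℝ) else 0) * (if u = G.fst e then (1:ℝ) else 0)) := by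
        refine le_trans (Finset.sum_le_sum_of_subset_of_nonneg (Finset.subset_univ _)
          (fun _ _ _ => by positivity)) (Finset.sum_le_sum fun u _ => ?_)
        by_cases h : Joins G e u a
        · rcases h with ⟨h1, h2⟩ | ⟨h1, h2⟩
          · have hD : (if u = G.fst e then (1:ℝ) else 0) = 1 := by simp [← h1]
            have hC : (if G.snd e = a then (1:ℝ) else 0) = 1 := by simp [h2]
            rw [hC, hD]
            have h0 : (0:ℝ) ≤ (if G.fst e = a then (1:ℝ) else 0) *
                (if u = G.snd e then (1:ℝ) else 0) := by positivity
            split_ifs <;> linarith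
          · have hA : (if G.fst e = a then (1:ℝ) else 0) = 1 := by simp [h1]
            have hB : (if u = G.snd e then (1:ℝ) else 0) = 1 := by simp [← h2]
            rw [hA, hB]
            have h0 : (0:ℝ) ≤ (if G.snd e = a then (1:ℝ) else 0) *
                (if u = G.fst e then (1:ℝ) else 0) := by positivity
            split_ifs <;> linarith
        · rw [if_neg h]
          positivity
    _ ≤ (if G.fst e = a then (1:ℝ) else 0) + (if G.snd e = a then (1:ℝ) else 0) := by
        rw [Finset.sum_add_distrib, ← Finset.mul_sum, ← Finset.mul_sum]
        rw [Finset.sum_ite_eq' Finset.univ (G.snd e) (fun _ => (1:ℝ)),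
          Finset.sum_ite_eq' Finset.univ (G.fst e) (fun _ => (1:ℝ))]
        simp

lemma mmR_le_ddR (G : Multigraph V) {u a : V} (h : u ≠ a) : mmR G u a ≤ ddR G a := by
  refine le_trans ?_ (sum_mmR_le G a)
  exact Finset.single_le_sum (fun i _ => mmR_nonneg G i a)
    (Finset.mem_erase.2 ⟨h, Finset.mem_univ u⟩)

lemma sum_ddR (G : Multigraph V) : ∑ v : V, ddR G v = 2 * (G.edgeCount : ℝ) := by
  simp only [ddR_eq_sum]
  rw [Finset.sum_comm]
  have : ∀ e : G.E, ∑ v : V,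
      ((if G.fst e = v then (1:ℝ) else 0) + (if G.snd e = v then (1:ℝ) else 0)) = 2 := by
    intro e
    rw [Finset.sum_add_distrib, Finset.sum_ite_eq Finset.univ (G.fst e) (fun _ => (1:ℝ)),
      Finset.sum_ite_eq Finset.univ (G.snd e) (fun _ => (1:ℝ))]
    simp; norm_num
  rw [Finset.sum_congr rfl fun e _ => this e, Finset.sum_const, Multigraph.edgeCount]
  simp [mul_comm]

lemma sum_mul_netFlow (G : Multigraph V) (f : G.E → ℝ) (φ : V → ℝ) :
    ∑ v : V, φ v * G.netFlow f v = ∑ e : G.E, f e * (φ (G.fst e) - φ (G.snd e)) := by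
  simp only [Multigraph.netFlow, Finset.mul_sum]
  rw [Finset.sum_comm]
  refine Finset.sum_congr rfl fun e _ => ?_
  have h1 : ∀ v : V, φ v * ((if G.fst e = v then f e else 0) - (if G.snd e = v then f e else 0))
      = (if G.fst e = v then φ v * f e else 0) - (if G.snd e = v then φ v * f e else 0) := by
    intro v; split_ifs <;> ring
  rw [Finset.sum_congr rfl fun v _ => h1 v, Finset.sum_sub_distrib,
    Finset.sum_ite_eq Finset.univ (G.fst e) (fun v => φ v * f e),
    Finset.sum_ite_eq Finset.univ (G.snd e) (fun v => φ v * f e)]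
  simp
  ring

lemma sum_netFlow (G : Multigraph V) (f : G.E → ℝ) : ∑ v : V, G.netFlow f v = 0 := by
  have h := sum_mul_netFlow G f (fun _ => 1)
  simpa using h

lemma netFlow_sink (G : Multigraph V) {ρ x : V} (hx : x ≠ ρ) {f : G.E → ℝ}
    (hf : G.IsUnitFlow ρ x f) : G.netFlow f x = -1 := by
  have h0 := sum_netFlow G f
  rw [← Finset.add_sum_erase _ _ (Finset.mem_univ x)] at h0
  have hρ : ρ ∈ Finset.univ.erase x := Finset.mem_erase.2 ⟨Ne.symm hx, Finset.mem_univ ρ⟩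
  rw [← Finset.add_sum_erase _ _ hρ] at h0
  have hz : ∑ v ∈ (Finset.univ.erase x).erase ρ, G.netFlow f v = 0 := by
    refine Finset.sum_eq_zero fun v hv => ?_
    have h1 := Finset.mem_erase.1 hv
    have h2 := Finset.mem_erase.1 h1.2
    exact hf.2 v h1.1 h2.1
  rw [hz, hf.1] at h0
  linarith

/-- The test potential used for the lower bound. -/
noncomputable def phi (G : Multigraph V) (ρ x v : V) : ℝ :=
  if v = x then 1 else if v = ρ then 0 else mmR G x v / ddR G v

lemma flow_pairing (G : Multigraph V) {ρ x : V} (hx : x ≠ ρ) {f : G.E → ℝ}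
    (hf : G.IsUnitFlow ρ x f) :
    ∑ e : G.E, f e * (phi G ρ x (G.fst e) - phi G ρ x (G.snd e)) = -1 := by
  rw [← sum_mul_netFlow]
  rw [← Finset.add_sum_erase _ _ (Finset.mem_univ x)]
  have hρ : ρ ∈ Finset.univ.erase x := Finset.mem_erase.2 ⟨Ne.symm hx, Finset.mem_univ ρ⟩
  rw [← Finset.add_sum_erase _ _ hρ]
  have hz : ∑ v ∈ (Finset.univ.erase x).erase ρ, phi G ρ x v * G.netFlow f v = 0 := by
    refine Finset.sum_eq_zero fun v hv => ?_
    have h1 := Finset.mem_erase.1 hv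
    have h2 := Finset.mem_erase.1 h1.2
    rw [hf.2 v h1.1 h2.1, mul_zero]
  rw [hz, hf.1, netFlow_sink G hx hf]
  simp [phi, Ne.symm hx]

/-- Charge function used in the energy accounting. -/
noncomputable def uAux (x ρ : V) (t : V → ℝ) (a b : V) : ℝ :=
  if a = b then 0
  else if a = x then 0
  else if a = ρ then (if b = x then 1 else 0)
  else if b = x then (1 - t a)^2 else (t a)^2

lemma uAux_x {x ρ : V} (t : V → ℝ) (b : V) : uAux x ρ t x b = 0 := by
  unfold uAux
  by_cases hxb : x = b <;> simp [hxb]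

lemma uAux_ρ {x ρ : V} (hx : x ≠ ρ) (t : V → ℝ) (b : V) :
    uAux x ρ t ρ b = if b = x then 1 else 0 := by
  unfold uAux
  by_cases hρb : ρ = b
  · rw [if_pos hρb, if_neg (fun h : b = x => hx (hρb.trans h).symm)]
  · simp [hρb, Ne.symm hx]

lemma uAux_mid {x ρ a : V} (hax : a ≠ x) (haρ : a ≠ ρ) (t : V → ℝ) (b : V) :
    uAux x ρ t a b = if b = a then 0 else if b = x then (1 - t a)^2 else (t a)^2 := by
  unfold uAux
  by_cases hba : b = a
  · simp [hba]
  · rw [if_neg (fun h : a = b => hba h.symm), if_neg hax, if_neg haρ, if_neg hba]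

lemma ind_pair_le {Cx Cρ Dx Dρ : Prop} (h1 : ¬(Cx ∧ Cρ)) (h2 : ¬(Dx ∧ Dρ)) :
    (if Cρ then (if Dx then (1:ℝ) else 0) else 0)
      + (if Dρ then (if Cx then (1:ℝ) else 0) else 0)
      ≤ if (Cx ∧ Dρ) ∨ (Cρ ∧ Dx) then (1:ℝ) else 0 := by
  split_ifs <;> first | tauto | norm_num

lemma mid_pointwise {A B Cx Dx : Prop} (h1 : ¬(A ∧ Cx)) (h2 : ¬(B ∧ Dx)) {p q : ℝ}
    (hp : 0 ≤ p) (hq : 0 ≤ q) :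
    (if A then (if B then 0 else if Dx then p else q) else 0)
      + (if B then (if A then 0 else if Cx then p else q) else 0)
      ≤ p * (if (Cx ∧ B) ∨ (A ∧ Dx) then (1:ℝ) else 0)
        + q * (((if A then (1:ℝ) else 0) + (if B then (1:ℝ) else 0))
            - (if (Cx ∧ B) ∨ (A ∧ Dx) then (1:ℝ) else 0)) := by
  split_ifs <;> first | tauto | linarith [hp, hq]

/-- `C(x)` : the conductance bound for the potential `phi`. -/
noncomputable def CC (G : Multigraph V) (ρ x : V) : ℝ :=
  mmR G x ρ + ∑ a ∈ (Finset.univ.erase ρ).erase x, mmR G x a * (ddR G a - mmR G x a) / ddR G a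

lemma alg_bound {mm dd : ℝ} (h0 : 0 ≤ mm) (h1 : mm ≤ dd) :
    (1 - mm/dd)^2 * mm + (mm/dd)^2 * (dd - mm) ≤ mm * (dd - mm) / dd := by
  rcases eq_or_lt_of_le (le_trans h0 h1) with h | h
  · have hm : mm = 0 := le_antisymm (h ▸ h1) h0
    simp [hm, ← h]
  · apply le_of_eq
    field_simp
    ring

set_option maxHeartbeats 2000000 in
lemma sq_diff_le_uAux {x ρ : V} (hx : x ≠ ρ) (t : V → ℝ) (htn : ∀ v, 0 ≤ t v) (a b : V) :
    ((if a = x then (1:ℝ) else if a = ρ then 0 else t a) -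
     (if b = x then (1:ℝ) else if b = ρ then 0 else t b))^2
      ≤ uAux x ρ t a b + uAux x ρ t b a := by
  by_cases hab : a = b
  · subst hab
    simp [uAux]
  · have hba : ¬ b = a := fun h => hab h.symm
    by_cases hax : a = x <;> by_cases haρ : a = ρ <;>
      by_cases hbx : b = x <;> by_cases hbρ : b = ρ <;>
        simp_all [uAux] <;>
        nlinarith [htn a, htn b, mul_nonneg (htn a) (htn b), sq_nonneg (t a), sq_nonneg (t b),
          sq_nonneg (1 - t a), sq_nonneg (1 - t b)]

set_option maxHeartbeats 2000000 in
lemma energy_le_CC (G : Multigraph V) {ρ x : V} (hx : x ≠ ρ) :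
    ∑ e : G.E, (phi G ρ x (G.fst e) - phi G ρ x (G.snd e))^2 ≤ CC G ρ x := by
  set t : V → ℝ := fun a => mmR G x a / ddR G a with ht
  have htn : ∀ v, 0 ≤ t v := fun v => div_nonneg (mmR_nonneg G x v) (ddR_nonneg G v)
  set TT : V → ℝ := fun a => ∑ e : G.E,
      ((if G.fst e = a then uAux x ρ t a (G.snd e) else 0)
        + (if G.snd e = a then uAux x ρ t a (G.fst e) else 0)) with hTT
  have step1 : ∀ e : G.E, (phi G ρ x (G.fst e) - phi G ρ x (G.snd e))^2
      ≤ uAux x ρ t (G.fst e) (G.snd e) + uAux x ρ t (G.snd e) (G.fst e) := by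
    intro e
    exact sq_diff_le_uAux hx t htn (G.fst e) (G.snd e)
  have regroup : ∑ e : G.E, (uAux x ρ t (G.fst e) (G.snd e) + uAux x ρ t (G.snd e) (G.fst e))
      = ∑ a : V, TT a := by
    simp only [hTT]
    rw [Finset.sum_comm]
    refine Finset.sum_congr rfl fun e _ => ?_
    rw [Finset.sum_add_distrib,
      Finset.sum_ite_eq Finset.univ (G.fst e) (fun a => uAux x ρ t a (G.snd e)),
      Finset.sum_ite_eq Finset.univ (G.snd e) (fun a => uAux x ρ t a (G.fst e))]
    simp
  have hmemρ : ρ ∈ Finset.univ.erase x := Finset.mem_erase.2 ⟨Ne.symm hx, Finset.mem_univ ρ⟩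
  have hsplit : ∑ a : V, TT a
      = TT x + TT ρ + ∑ a ∈ (Finset.univ.erase ρ).erase x, TT a := by
    rw [← Finset.add_sum_erase _ TT (Finset.mem_univ x), ← Finset.add_sum_erase _ TT hmemρ,
      Finset.erase_right_comm]
    ring
  have hTxρ : TT x + TT ρ ≤ mmR G x ρ := by
    have hTx0 : TT x = 0 := by
      simp only [hTT]
      refine Finset.sum_eq_zero fun e _ => ?_
      rw [uAux_x, uAux_x]
      simp
    rw [hTx0, zero_add]
    simp only [hTT]
    rw [mmR_eq_sum]
    refine Finset.sum_le_sum fun e _ => ?_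
    rw [uAux_ρ hx, uAux_ρ hx]
    have h1 : ¬(G.fst e = x ∧ G.fst e = ρ) := fun h => hx (h.1.symm.trans h.2)
    have h2 : ¬(G.snd e = x ∧ G.snd e = ρ) := fun h => hx (h.1.symm.trans h.2)
    simp only [Joins]
    split_ifs <;> simp_all <;> first | tauto | norm_num
  have hTmid : ∀ a ∈ (Finset.univ.erase ρ).erase x,
      TT a ≤ mmR G x a * (ddR G a - mmR G x a) / ddR G a := by
    intro a ha
    have hax : a ≠ x := (Finset.mem_erase.1 ha).1
    have haρ : a ≠ ρ := (Finset.mem_erase.1 (Finset.mem_erase.1 ha).2).1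
    have hxa : x ≠ a := fun h => hax h.symm
    have key : TT a ≤ (1 - t a)^2 * mmR G x a + (t a)^2 * (ddR G a - mmR G x a) := by
      have hrhs : (1 - t a)^2 * mmR G x a + (t a)^2 * (ddR G a - mmR G x a)
          = ∑ e : G.E, ((1 - t a)^2 * (if Joins G e x a then (1:ℝ) else 0)
            + (t a)^2 * (((if G.fst e = a then (1:ℝ) else 0)
                + (if G.snd e = a then (1:ℝ) else 0))
              - (if Joins G e x a then (1:ℝ) else 0))) := by
        rw [mmR_eq_sum, ddR_eq_sum, ← Finset.sum_sub_distrib, Finset.mul_sum, Finset.mul_sum,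
          ← Finset.sum_add_distrib]
      rw [hrhs]
      simp only [hTT]
      refine Finset.sum_le_sum fun e _ => ?_
      rw [uAux_mid hax haρ, uAux_mid hax haρ]
      have h1 : ¬(G.fst e = a ∧ G.fst e = x) := fun h => hax (h.1.symm.trans h.2)
      have h2 : ¬(G.snd e = a ∧ G.snd e = x) := fun h => hax (h.1.symm.trans h.2)
      simp only [Joins]
      split_ifs <;> simp_all <;> first | tauto | nlinarith [sq_nonneg (1 - t a), sq_nonneg (t a)]
    refine le_trans key ?_
    have halg := alg_bound (mmR_nonneg G x a) (mmR_le_ddR G hxa)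
    calc (1 - t a)^2 * mmR G x a + (t a)^2 * (ddR G a - mmR G x a)
        = (1 - mmR G x a / ddR G a)^2 * mmR G x a
          + (mmR G x a / ddR G a)^2 * (ddR G a - mmR G x a) := by rw [ht]
      _ ≤ _ := halg
  calc ∑ e : G.E, (phi G ρ x (G.fst e) - phi G ρ x (G.snd e))^2
      ≤ ∑ e : G.E, (uAux x ρ t (G.fst e) (G.snd e) + uAux x ρ t (G.snd e) (G.fst e)) :=
        Finset.sum_le_sum fun e _ => step1 e
    _ = TT x + TT ρ + ∑ a ∈ (Finset.univ.erase ρ).erase x, TT a := by rw [regroup, hsplit]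
    _ ≤ mmR G x ρ + ∑ a ∈ (Finset.univ.erase ρ).erase x,
          mmR G x a * (ddR G a - mmR G x a) / ddR G a :=
        add_le_add hTxρ (Finset.sum_le_sum hTmid)
    _ = CC G ρ x := rfl

lemma mmR_comm (G : Multigraph V) (u v : V) : mmR G u v = mmR G v u := by
  have h : (Finset.univ.filter fun e : G.E => Joins G e u v)
      = (Finset.univ.filter fun e : G.E => Joins G e v u) := by
    ext e
    simp only [Finset.mem_filter, Finset.mem_univ, true_and]
    unfold Joins
    tauto
  rw [mmR, mmR, h]

lemma one_le_energy_mul (G : Multigraph V) {ρ x : V} (hx : x ≠ ρ) {f : G.E → ℝ}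
    (hf : G.IsUnitFlow ρ x f) : 1 ≤ (∑ e : G.E, f e ^ 2) * CC G ρ x := by
  have hpair := flow_pairing G hx hf
  have hcs := Finset.sum_mul_sq_le_sq_mul_sq Finset.univ f
    (fun e => phi G ρ x (G.fst e) - phi G ρ x (G.snd e))
  rw [hpair] at hcs
  have hE : 0 ≤ ∑ e : G.E, f e ^ 2 := Finset.sum_nonneg fun e _ => sq_nonneg _
  have h3 := energy_le_CC G hx
  nlinarith [hcs, h3, hE]

lemma CC_nonneg (G : Multigraph V) {ρ x : V} (hx : x ≠ ρ) : 0 ≤ CC G ρ x := by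
  unfold CC
  refine add_nonneg (mmR_nonneg G x ρ) (Finset.sum_nonneg fun a ha => ?_)
  have hax : x ≠ a := fun h => (Finset.mem_erase.1 ha).1 h.symm
  exact div_nonneg (mul_nonneg (mmR_nonneg G x a)
    (sub_nonneg.2 (mmR_le_ddR G hax))) (ddR_nonneg G a)

lemma sum_CC_le (G : Multigraph V) (ρ : V) (hd : ∀ a : V, a ≠ ρ → (1:ℝ) ≤ ddR G a) :
    ∑ x ∈ Finset.univ.erase ρ, CC G ρ x
      ≤ 2 * (G.edgeCount : ℝ) - ((Finset.univ.erase ρ).card : ℝ) := by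
  unfold CC
  rw [Finset.sum_add_distrib]
  have hP : ∑ x ∈ Finset.univ.erase ρ, mmR G x ρ ≤ ddR G ρ := sum_mmR_le G ρ
  have hswap : ∑ x ∈ Finset.univ.erase ρ, ∑ a ∈ (Finset.univ.erase ρ).erase x,
        mmR G x a * (ddR G a - mmR G x a) / ddR G a
      = ∑ a ∈ Finset.univ.erase ρ, ∑ x ∈ (Finset.univ.erase ρ).erase a,
        mmR G x a * (ddR G a - mmR G x a) / ddR G a := by
    apply Finset.sum_comm'
    intro x a
    simp only [Finset.mem_erase, Finset.mem_univ, and_true]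
    tauto
  rw [hswap]
  have hQ : ∀ a ∈ Finset.univ.erase ρ,
      ∑ x ∈ (Finset.univ.erase ρ).erase a, mmR G x a * (ddR G a - mmR G x a) / ddR G a
        ≤ ddR G a - 1 := by
    intro a ha
    have haρ : a ≠ ρ := (Finset.mem_erase.1 ha).1
    have hd1 : (1:ℝ) ≤ ddR G a := hd a haρ
    have hdpos : (0:ℝ) < ddR G a := lt_of_lt_of_le one_pos hd1
    have hstep : ∀ x ∈ (Finset.univ.erase ρ).erase a,
        mmR G x a * (ddR G a - mmR G x a) / ddR G a
          ≤ mmR G x a * ((ddR G a - 1) / ddR G a) := by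
      intro x hxs
      rw [← mul_div_assoc]
      rw [div_le_div_iff_of_pos_right hdpos]
      have hmm : mmR G x a ≤ (mmR G x a)^2 := by
        unfold mmR
        have := Nat.le_self_pow (two_ne_zero) ((Finset.univ.filter fun e : G.E =>
          Joins G e x a).card)
        exact_mod_cast this
      nlinarith [hmm]
    have hsub : ∑ x ∈ (Finset.univ.erase ρ).erase a, mmR G x a ≤ ddR G a := by
      refine le_trans ?_ (sum_mmR_le G a)
      refine Finset.sum_le_sum_of_subset_of_nonneg ?_ (fun u _ _ => mmR_nonneg G u a)
      exact Finset.erase_subset_erase a (Finset.erase_subset ρ Finset.univ)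
    calc ∑ x ∈ (Finset.univ.erase ρ).erase a, mmR G x a * (ddR G a - mmR G x a) / ddR G a
        ≤ ∑ x ∈ (Finset.univ.erase ρ).erase a, mmR G x a * ((ddR G a - 1) / ddR G a) :=
          Finset.sum_le_sum hstep
      _ = (∑ x ∈ (Finset.univ.erase ρ).erase a, mmR G x a) * ((ddR G a - 1) / ddR G a) :=
          (Finset.sum_mul _ _ _).symm
      _ ≤ ddR G a * ((ddR G a - 1) / ddR G a) := by
          refine mul_le_mul_of_nonneg_right hsub ?_
          exact div_nonneg (by linarith) (le_of_lt hdpos)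
      _ = ddR G a - 1 := by
          field_simp
  have hQsum : ∑ a ∈ Finset.univ.erase ρ, ∑ x ∈ (Finset.univ.erase ρ).erase a,
        mmR G x a * (ddR G a - mmR G x a) / ddR G a
      ≤ ∑ a ∈ Finset.univ.erase ρ, (ddR G a - 1) := Finset.sum_le_sum hQ
  have hdd : ddR G ρ + ∑ a ∈ Finset.univ.erase ρ, ddR G a = 2 * (G.edgeCount : ℝ) := by
    rw [Finset.add_sum_erase _ _ (Finset.mem_univ ρ)]
    exact sum_ddR G
  have hcount : ∑ a ∈ Finset.univ.erase ρ, (ddR G a - 1)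
      = (∑ a ∈ Finset.univ.erase ρ, ddR G a) - ((Finset.univ.erase ρ).card : ℝ) := by
    rw [Finset.sum_sub_distrib, Finset.sum_const]
    simp
  linarith [hQsum]

lemma rootedAvg_lower (G : Multigraph V) (ρ : V) {α : ℝ} (hα : 2 ≤ α) {n : ℕ} (hn : 1 ≤ n)
    (hcard : Fintype.card V = n + 1) (hE : (G.edgeCount : ℝ) ≤ α * n / 2) :
    ENNReal.ofReal (1 / (α - 1)) ≤ G.rootedAvg ρ := by
  have hscard : ((Finset.univ.erase ρ).card : ℝ) = (n : ℝ) := by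
    rw [Finset.card_erase_of_mem (Finset.mem_univ ρ), Finset.card_univ, hcard]
    simp
  by_cases hpos : ∀ x ∈ Finset.univ.erase ρ, 0 < CC G ρ x
  · -- all conductance bounds positive
    have hd : ∀ a : V, a ≠ ρ → (1:ℝ) ≤ ddR G a := by
      intro a ha
      by_contra hlt
      push_neg at hlt
      have h0 : ddR G a = 0 := by
        have hdeg : G.degree a = 0 := by
          by_contra hne
          have h1 : 1 ≤ G.degree a := Nat.one_le_iff_ne_zero.2 hne
          have h2 : (1:ℝ) ≤ ddR G a := by unfold ddR; exact_mod_cast h1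
          linarith
        simp [ddR, hdeg]
      have hCC : CC G ρ a = 0 := by
        unfold CC
        have hm : ∀ u : V, u ≠ a → mmR G a u = 0 := by
          intro u hu
          have h1 := mmR_nonneg G a u
          have h2 : mmR G a u ≤ ddR G a := by
            rw [mmR_comm]
            exact h0 ▸ (mmR_le_ddR G hu)
          linarith [h0 ▸ h2]
        rw [hm ρ (Ne.symm ha), Finset.sum_eq_zero, add_zero]
        intro y hy
        have hya : y ≠ a := (Finset.mem_erase.1 hy).1
        rw [hm y hya]
        simp
      have := hpos a (Finset.mem_erase.2 ⟨ha, Finset.mem_univ a⟩)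
      rw [hCC] at this
      exact lt_irrefl 0 this
    have hsum := sum_CC_le G ρ hd
    have h2E : 2 * (G.edgeCount : ℝ) ≤ α * n := by linarith
    have hsum2 : ∑ x ∈ Finset.univ.erase ρ, CC G ρ x ≤ (α - 1) * n := by
      rw [hscard] at hsum
      linarith
    have hne : (Finset.univ.erase ρ).Nonempty := by
      rw [← Finset.card_pos]
      have : (0:ℝ) < ((Finset.univ.erase ρ).card : ℝ) := by
        rw [hscard]
        exact_mod_cast hn
      exact_mod_cast this
    have hCCpos : 0 < ∑ x ∈ Finset.univ.erase ρ, CC G ρ x := Finset.sum_pos hpos hne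
    have hAM : ((n:ℝ))^2 / (∑ x ∈ Finset.univ.erase ρ, CC G ρ x)
        ≤ ∑ x ∈ Finset.univ.erase ρ, 1 / CC G ρ x := by
      have h := Finset.sq_sum_div_le_sum_sq_div (Finset.univ.erase ρ) (fun _ => (1:ℝ)) hpos
      simp only [one_pow, Finset.sum_const, nsmul_eq_mul, mul_one, hscard] at h
      exact h
    have hn1 : (1:ℝ) ≤ (n:ℝ) := by exact_mod_cast hn
    have hα1 : (0:ℝ) < α - 1 := by linarith
    have hfinal : (n:ℝ) / (α - 1) ≤ ∑ x ∈ Finset.univ.erase ρ, 1 / CC G ρ x := by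
      refine le_trans ?_ hAM
      rw [div_le_div_iff₀ hα1 hCCpos]
      nlinarith [hsum2]
    have hres : ∀ x ∈ Finset.univ.erase ρ, ENNReal.ofReal (1 / CC G ρ x) ≤ G.effRes ρ x := by
      intro x hxs
      have hx : x ≠ ρ := (Finset.mem_erase.1 hxs).1
      rw [Multigraph.effRes, if_neg (Ne.symm hx)]
      refine le_iInf fun f => ?_
      apply ENNReal.ofReal_le_ofReal
      rw [div_le_iff₀ (hpos x hxs)]
      exact one_le_energy_mul G hx f.2
    have hRtot : ENNReal.ofReal ((n:ℝ) / (α - 1)) ≤ G.Rtot ρ := by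
      calc ENNReal.ofReal ((n:ℝ) / (α - 1))
          ≤ ENNReal.ofReal (∑ x ∈ Finset.univ.erase ρ, 1 / CC G ρ x) :=
            ENNReal.ofReal_le_ofReal hfinal
        _ = ∑ x ∈ Finset.univ.erase ρ, ENNReal.ofReal (1 / CC G ρ x) :=
            ENNReal.ofReal_sum_of_nonneg fun x hxs => le_of_lt (one_div_pos.2 (hpos x hxs))
        _ ≤ ∑ x ∈ Finset.univ.erase ρ, G.effRes ρ x := Finset.sum_le_sum hres
        _ ≤ ∑ x : V, G.effRes ρ x := Finset.sum_le_sum_of_subset (Finset.subset_univ _)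
        _ = G.Rtot ρ := rfl
    unfold Multigraph.rootedAvg
    rw [hcard]
    simp only [Nat.add_sub_cancel]
    rw [ENNReal.le_div_iff_mul_le (Or.inl (Nat.cast_ne_zero.2 (by omega : n ≠ 0)))
      (Or.inl (ENNReal.natCast_ne_top n))]
    calc ENNReal.ofReal (1 / (α - 1)) * (n : ℝ≥0∞)
        = ENNReal.ofReal ((n:ℝ) / (α - 1)) := by
          rw [← ENNReal.ofReal_natCast n, ← ENNReal.ofReal_mul (by positivity)]
          congr 1
          ring
      _ ≤ G.Rtot ρ := hRtot
  · -- some CC is zero: the resistance is infinite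
    push_neg at hpos
    obtain ⟨x, hxs, hle⟩ := hpos
    have hx : x ≠ ρ := (Finset.mem_erase.1 hxs).1
    have h0 : CC G ρ x = 0 := le_antisymm hle (CC_nonneg G hx)
    have hempty : IsEmpty {f : G.E → ℝ // G.IsUnitFlow ρ x f} := by
      refine ⟨fun f => ?_⟩
      have h1 := one_le_energy_mul G hx f.2
      rw [h0, mul_zero] at h1
      linarith
    have htop : G.effRes ρ x = ⊤ := by
      rw [Multigraph.effRes, if_neg (Ne.symm hx)]
      exact iInf_of_empty _
    have hRtot : G.Rtot ρ = ⊤ := by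
      unfold Multigraph.Rtot
      rw [ENNReal.sum_eq_top]
      exact ⟨x, Finset.mem_univ x, htop⟩
    unfold Multigraph.rootedAvg
    rw [hRtot, ENNReal.top_div_of_ne_top (ENNReal.natCast_ne_top _)]
    exact le_top

end LowerBoundAux

lemma bFun_lower {α : ℝ} (hα : 2 ≤ α) (n : ℕ) (hn : 1 ≤ n) :
    ENNReal.ofReal (1 / (α - 1)) ≤ bFun n α := by
  refine le_iInf fun p => ?_
  obtain ⟨⟨G, ρ⟩, hG⟩ := p
  exact rootedAvg_lower G ρ hα hn (by simp) hG

/-- **Theorem (two-step lower bound).** For all `α ≥ 2`, `b(α) ≥ 1/(α-1)`. -/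
theorem stmt12 (α : ℝ) (hα : 2 ≤ α) (L : ℝ≥0∞)
    (hL : Filter.Tendsto (fun n : ℕ => bFun (n + 1) α) Filter.atTop (nhds L)) :
    ENNReal.ofReal (1 / (α - 1)) ≤ L := by
  exact ge_of_tendsto' hL fun n => bFun_lower hα (n + 1) (by omega)
end

section
/- Let G be a connected rooted graph with n non-root vertices, with no leaves, and with fewer than 9n/8 edges (average degree less than 9/4). Then there exists a vertex x of degree 2, with neighbours y₁ and y₂, such that Rtot(G) − Rtot(G⁺/x) ≥ 1/100, where G/x is the graph obtained from G by contracting the edge y₁x (equivalently, deleting x and adding an edge y₁y₂), and G⁺/x is G/x with one additional leaf attached to the root (so G⁺/x has the same numbers of vertices and edges as G). -/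
open scoped ENNReal

set_option linter.unusedSectionVars false

attribute [local instance 10] Classical.propDecidable

open Multigraph

/-! ### Auxiliary development for the proof -/

section Proof15Aux

open Finset

namespace Multigraph

variable {V : Type} [Fintype V] [DecidableEq V]

/-- Current out of `v` along `e`. -/
noncomputable def out (G : Multigraph V) (f : G.E → ℝ) (e : G.E) (v : V) : ℝ :=
  (if G.fst e = v then f e else 0) - (if G.snd e = v then f e else 0)

lemma netFlow_eq_sum_out (G : Multigraph V) (f : G.E → ℝ) (v : V) :
    G.netFlow f v = ∑ e : G.E, G.out f e v := rfl

lemma out_eq_zero (G : Multigraph V) (f : G.E → ℝ) {e : G.E} {v : V}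
    (h1 : G.fst e ≠ v) (h2 : G.snd e ≠ v) : G.out f e v = 0 := by
  simp [out, h1, h2]

/-- The endpoints of `e` are `p` and `q` (in some order). -/
def Ends (G : Multigraph V) (e : G.E) (p q : V) : Prop :=
  (G.fst e = p ∧ G.snd e = q) ∨ (G.fst e = q ∧ G.snd e = p)

lemma Ends.symm {G : Multigraph V} {e : G.E} {p q : V} (h : G.Ends e p q) : G.Ends e q p :=
  Or.symm h

/-- `e` has exactly one endpoint equal to `v`. -/
def Hits1 (G : Multigraph V) (e : G.E) (v : V) : Prop :=
  (G.fst e = v ∧ G.snd e ≠ v) ∨ (G.snd e = v ∧ G.fst e ≠ v)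

lemma Ends.hits1 {G : Multigraph V} {e : G.E} {p q : V} (h : G.Ends e p q) (hpq : p ≠ q) :
    G.Hits1 e p := by
  rcases h with ⟨h1, h2⟩ | ⟨h1, h2⟩
  · exact Or.inl ⟨h1, by rw [h2]; exact hpq.symm⟩
  · exact Or.inr ⟨h2, by rw [h1]; exact hpq.symm⟩

lemma Hits1.out_sq {G : Multigraph V} {e : G.E} {v : V} (h : G.Hits1 e v) (f : G.E → ℝ) :
    (G.out f e v) ^ 2 = (f e) ^ 2 := by
  rcases h with ⟨h1, h2⟩ | ⟨h1, h2⟩ <;> simp [out, h1, h2] <;> try ring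

lemma out_other {G : Multigraph V} {e : G.E} {p q : V} (h : G.Ends e p q) (hpq : p ≠ q)
    (f : G.E → ℝ) : G.out f e q = - G.out f e p := by
  rcases h with ⟨h1, h2⟩ | ⟨h1, h2⟩ <;> simp [out, h1, h2, hpq, hpq.symm]

lemma out_eq_zero_of_ends {G : Multigraph V} {e : G.E} {p q v : V} (h : G.Ends e p q)
    (hp : p ≠ v) (hq : q ≠ v) (f : G.E → ℝ) : G.out f e v = 0 := by
  rcases h with ⟨h1, h2⟩ | ⟨h1, h2⟩
  · exact G.out_eq_zero f (h1 ▸ hp) (h2 ▸ hq)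
  · exact G.out_eq_zero f (h1 ▸ hq) (h2 ▸ hp)

lemma netFlow_pair (G : Multigraph V) (f : G.E → ℝ) {v : V} {e₁ e₂ : G.E} (h12 : e₁ ≠ e₂)
    (hO : ∀ e : G.E, e ≠ e₁ → e ≠ e₂ → G.fst e ≠ v ∧ G.snd e ≠ v) :
    G.netFlow f v = G.out f e₁ v + G.out f e₂ v := by
  classical
  have hz : ∀ e ∈ Finset.univ, e ∉ ({e₁, e₂} : Finset G.E) → G.out f e v = 0 := by
    intro e _ he
    simp only [Finset.mem_insert, Finset.mem_singleton, not_or] at he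
    exact G.out_eq_zero f (hO e he.1 he.2).1 (hO e he.1 he.2).2
  rw [netFlow_eq_sum_out, ← Finset.sum_subset (Finset.subset_univ ({e₁, e₂} : Finset G.E)) hz,
    Finset.sum_pair h12]

lemma sum_netFlow (G : Multigraph V) (f : G.E → ℝ) : ∑ v : V, G.netFlow f v = 0 := by
  unfold netFlow
  rw [Finset.sum_comm]
  apply Finset.sum_eq_zero
  intro e _
  rw [Finset.sum_sub_distrib]
  simp [Finset.sum_ite_eq]

lemma netFlow_sink {G : Multigraph V} {f : G.E → ℝ} {ρ z : V} (hf : G.IsUnitFlow ρ z f)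
    (hz : ρ ≠ z) : G.netFlow f z = -1 := by
  classical
  have h0 := G.sum_netFlow f
  have hρ : ρ ∈ (Finset.univ : Finset V) := Finset.mem_univ ρ
  rw [← Finset.add_sum_erase _ _ hρ] at h0
  have hzmem : z ∈ Finset.univ.erase ρ := Finset.mem_erase.2 ⟨hz.symm, Finset.mem_univ z⟩
  rw [← Finset.add_sum_erase _ _ hzmem] at h0
  have hrest : ∑ v ∈ (Finset.univ.erase ρ).erase z, G.netFlow f v = 0 := by
    apply Finset.sum_eq_zero
    intro v hv
    have h1 := (Finset.mem_erase.mp hv).1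
    have h2 := (Finset.mem_erase.mp (Finset.mem_erase.mp hv).2).1
    exact hf.2 v h2 h1
  rw [hf.1, hrest] at h0
  linarith

lemma energy_nonneg (G : Multigraph V) (f : G.E → ℝ) : 0 ≤ ∑ e : G.E, (f e) ^ 2 :=
  Finset.sum_nonneg fun _ _ => sq_nonneg _

lemma energy_four (G : Multigraph V) (f : G.E → ℝ) {e₁ e₂ e₃ e₄ : G.E}
    (h12 : e₁ ≠ e₂) (h13 : e₁ ≠ e₃) (h14 : e₁ ≠ e₄) (h23 : e₂ ≠ e₃) (h24 : e₂ ≠ e₄)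
    (h34 : e₃ ≠ e₄) :
    (f e₁) ^ 2 + (f e₂) ^ 2 + (f e₃) ^ 2 + (f e₄) ^ 2 ≤ ∑ e : G.E, (f e) ^ 2 := by
  classical
  have hsub : ({e₁, e₂, e₃, e₄} : Finset G.E).sum (fun e => (f e) ^ 2) ≤ ∑ e : G.E, (f e) ^ 2 :=
    Finset.sum_le_sum_of_subset_of_nonneg (Finset.subset_univ _) (fun _ _ _ => sq_nonneg _)
  rw [Finset.sum_insert (by simp [h12, h13, h14]), Finset.sum_insert (by simp [h23, h24]),
    Finset.sum_insert (by simp [h34]), Finset.sum_singleton] at hsub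
  linarith

end Multigraph

end Proof15Aux


section Proof15Contract

open Finset Multigraph

variable {V : Type} [Fintype V] [DecidableEq V]

/-- The current assignment on `G⁺/x` induced by `f`, with current `c` on the new
edge `y₁y₂` (oriented `y₁ → y₂`) and current `d` on the new leaf edge (oriented `x → ρ`). -/
noncomputable def mapFlow (G : Multigraph V) (x ρ : V) (e₁ e₂ : G.E) (u w : V)
    (f : G.E → ℝ) (c d : ℝ) : (contractPlus G x ρ e₁ e₂ u w).E → ℝ :=
  Sum.elim (fun e => f e.1) (fun i => if i = 0 then c else d)

lemma sum_contract_subtype (G : Multigraph V) {e₁ e₂ : G.E} (h12 : e₁ ≠ e₂) (F : G.E → ℝ) :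
    (∑ e : {e : G.E // e ≠ e₁ ∧ e ≠ e₂}, F e.1) = (∑ e : G.E, F e) - F e₁ - F e₂ := by
  classical
  have h1 : ∑ e ∈ Finset.univ \ {e₁, e₂}, F e = ∑ e : {e : G.E // e ≠ e₁ ∧ e ≠ e₂}, F e.1 := by
    apply Finset.sum_subtype
    intro e
    simp [Finset.mem_sdiff, not_or]
  rw [← h1, Finset.sum_sdiff_eq_sub (Finset.subset_univ _), Finset.sum_pair h12]
  ring

lemma netFlow_contract (G : Multigraph V) (x ρ u w : V) (e₁ e₂ : G.E) (h12 : e₁ ≠ e₂)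
    (f : G.E → ℝ) (c d : ℝ) (v : V) :
    (contractPlus G x ρ e₁ e₂ u w).netFlow (mapFlow G x ρ e₁ e₂ u w f c d) v =
      G.netFlow f v - G.out f e₁ v - G.out f e₂ v
        + ((if u = v then c else 0) - (if w = v then c else 0))
        + ((if x = v then d else 0) - (if ρ = v then d else 0)) := by
  classical
  have hsub := sum_contract_subtype G h12 (fun e => G.out f e v)
  simp only [out] at hsub
  unfold netFlow mapFlow contractPlus
  rw [Fintype.sum_sum_type, Fin.sum_univ_two]
  simp only [Sum.elim_inl, Sum.elim_inr]
  erw [hsub]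
  have h0 : ((0 : Fin 2) = 0) = True := by simp
  have h1 : ((1 : Fin 2) = 0) = False := by simp [Fin.ext_iff]
  simp only [h0, h1, if_true, if_false]
  unfold Multigraph.out
  ring

lemma energy_contract (G : Multigraph V) (x ρ u w : V) (e₁ e₂ : G.E) (h12 : e₁ ≠ e₂)
    (f : G.E → ℝ) (c d : ℝ) :
    (∑ e' : (contractPlus G x ρ e₁ e₂ u w).E, (mapFlow G x ρ e₁ e₂ u w f c d e') ^ 2) =
      (∑ e : G.E, (f e) ^ 2) - (f e₁) ^ 2 - (f e₂) ^ 2 + c ^ 2 + d ^ 2 := by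
  classical
  unfold mapFlow contractPlus
  rw [Fintype.sum_sum_type]
  simp only [Sum.elim_inl, Sum.elim_inr]
  rw [Fin.sum_univ_two]
  have h1 : ((1 : Fin 2) = 0) = False := by simp [Fin.ext_iff]
  rw [sum_contract_subtype G h12 (fun e => (f e) ^ 2)]
  simp only [h1, if_false, if_true, if_pos rfl]
  ring

/-- Unit-flow certificate for a mapped flow on `G⁺/x`. -/
lemma isUnitFlow_mapFlow (G : Multigraph V) {ρ x u w : V} {e₁ e₂ : G.E} (h12 : e₁ ≠ e₂)
    (hE1 : G.Ends e₁ x u) (hE2 : G.Ends e₂ x w)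
    (hρx : ρ ≠ x) (hρu : ρ ≠ u) (hρw : ρ ≠ w)
    (hxu : x ≠ u) (hxw : x ≠ w) (huw : u ≠ w)
    (f : G.E → ℝ) (c d : ℝ) (t : V) (ht : t ≠ ρ)
    (hρ : G.netFlow f ρ - d = 1)
    (hx : x ≠ t → G.netFlow f x - G.out f e₁ x - G.out f e₂ x + d = 0)
    (hu : u ≠ t → G.netFlow f u - G.out f e₁ u + c = 0)
    (hw : w ≠ t → G.netFlow f w - G.out f e₂ w - c = 0)
    (hother : ∀ v, v ≠ ρ → v ≠ t → v ≠ x → v ≠ u → v ≠ w → G.netFlow f v = 0) :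
    (contractPlus G x ρ e₁ e₂ u w).IsUnitFlow ρ t (mapFlow G x ρ e₁ e₂ u w f c d) := by
  constructor
  · rw [netFlow_contract G x ρ u w e₁ e₂ h12]
    rw [out_eq_zero_of_ends hE1 hρx.symm hρu.symm, out_eq_zero_of_ends hE2 hρx.symm hρw.symm]
    rw [if_neg hρu.symm, if_neg hρw.symm, if_neg hρx.symm, if_pos rfl]
    linarith
  · intro v hvρ hvt
    rw [netFlow_contract G x ρ u w e₁ e₂ h12]
    by_cases hvx : v = x
    · subst hvx
      rw [if_neg (Ne.symm hxu), if_neg (Ne.symm hxw), if_pos rfl, if_neg hρx]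
      linarith [hx hvt]
    · by_cases hvu : v = u
      · subst hvu
        rw [out_eq_zero_of_ends hE2 hxu (Ne.symm huw)]
        rw [if_pos rfl, if_neg (Ne.symm huw), if_neg hxu, if_neg hρu]
        linarith [hu hvt]
      · by_cases hvw : v = w
        · subst hvw
          rw [out_eq_zero_of_ends hE1 hxw huw]
          rw [if_neg huw, if_pos rfl, if_neg hxw, if_neg hρw]
          linarith [hw hvt]
        · rw [out_eq_zero_of_ends hE1 (Ne.symm hvx) (Ne.symm hvu),
            out_eq_zero_of_ends hE2 (Ne.symm hvx) (Ne.symm hvw)]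
          rw [if_neg (Ne.symm hvu), if_neg (Ne.symm hvw),
            if_neg (Ne.symm hvx), if_neg (Ne.symm hvρ)]
          have := hother v hvρ hvt hvx hvu hvw
          linarith

lemma effRes_le_flow (G : Multigraph V) {p q : V} (f : G.E → ℝ) (hf : G.IsUnitFlow p q f) :
    G.effRes p q ≤ ENNReal.ofReal (∑ e : G.E, (f e) ^ 2) := by
  by_cases h : p = q
  · rw [effRes, if_pos h]; exact zero_le
  · rw [effRes, if_neg h]
    exact iInf_le (fun g : {g : G.E → ℝ // G.IsUnitFlow p q g} =>
      ENNReal.ofReal (∑ e : G.E, (g.1 e) ^ 2)) ⟨f, hf⟩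

lemma exists_flow_le (G : Multigraph V) {p q : V} (h : p ≠ q) (hfin : G.effRes p q ≠ ⊤)
    {ε : ℝ≥0∞} (hε : ε ≠ 0) :
    ∃ f : G.E → ℝ, G.IsUnitFlow p q f ∧
      ENNReal.ofReal (∑ e : G.E, (f e) ^ 2) ≤ G.effRes p q + ε := by
  have h1 : G.effRes p q < G.effRes p q + ε := ENNReal.lt_add_right hfin hε
  have heq : G.effRes p q = ⨅ f : {f : G.E → ℝ // G.IsUnitFlow p q f},
      ENNReal.ofReal (∑ e : G.E, (f.1 e) ^ 2) := by
    rw [effRes, if_neg h]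
  have h2 : (⨅ f : {f : G.E → ℝ // G.IsUnitFlow p q f},
      ENNReal.ofReal (∑ e : G.E, (f.1 e) ^ 2)) < G.effRes p q + ε := heq ▸ h1
  obtain ⟨⟨f, hf⟩, hlt⟩ := iInf_lt_iff.mp h2
  exact ⟨f, hf, hlt.le⟩

end Proof15Contract


section Proof15Res

open Finset Multigraph

variable {V : Type} [Fintype V] [DecidableEq V]

lemma effRes_contract_le (G : Multigraph V) (ρ x u w : V) (e₁ e₂ : G.E) (h12 : e₁ ≠ e₂)
    (hE1 : G.Ends e₁ x u) (hE2 : G.Ends e₂ x w)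
    (hρx : ρ ≠ x) (hρu : ρ ≠ u) (hρw : ρ ≠ w)
    (hxu : x ≠ u) (hxw : x ≠ w) (huw : u ≠ w)
    (Ox : ∀ e, e ≠ e₁ → e ≠ e₂ → G.fst e ≠ x ∧ G.snd e ≠ x)
    (z : V) (hzx : z ≠ x) (hzu : z ≠ u) (hzw : z ≠ w) :
    (contractPlus G x ρ e₁ e₂ u w).effRes ρ z ≤ G.effRes ρ z := by
  by_cases hρz : ρ = z
  · have h0 : (contractPlus G x ρ e₁ e₂ u w).effRes ρ z = 0 := by
      rw [effRes, if_pos hρz]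
    rw [h0]; exact zero_le
  by_cases hfin : G.effRes ρ z = ⊤
  · rw [hfin]; exact le_top
  apply ENNReal.le_of_forall_pos_le_add
  intro ε hε _
  obtain ⟨f, hf, hfle⟩ := exists_flow_le G hρz hfin (ENNReal.coe_ne_zero.mpr hε.ne')
  set c := - G.out f e₁ x with hc
  have hKx : G.netFlow f x = G.out f e₁ x + G.out f e₂ x := G.netFlow_pair f h12 Ox
  have hx0 : G.netFlow f x = 0 := hf.2 x (Ne.symm hρx) (Ne.symm hzx)
  have hu0 : G.netFlow f u = 0 := hf.2 u (Ne.symm hρu) (Ne.symm hzu)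
  have hw0 : G.netFlow f w = 0 := hf.2 w (Ne.symm hρw) (Ne.symm hzw)
  have hou : G.out f e₁ u = - G.out f e₁ x := out_other hE1 hxu f
  have how : G.out f e₂ w = - G.out f e₂ x := out_other hE2 hxw f
  have hg := isUnitFlow_mapFlow G h12 hE1 hE2 hρx hρu hρw hxu hxw huw f c 0 z
    (fun h => hρz h.symm)
    (by rw [sub_zero]; exact hf.1)
    (fun _ => by linarith)
    (fun _ => by linarith)
    (fun _ => by linarith)
    (fun v hvρ hvz _ _ _ => hf.2 v hvρ hvz)
  have hsq : c ^ 2 = (f e₁) ^ 2 := by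
    rw [hc, neg_sq]; exact Hits1.out_sq (hE1.hits1 hxu) f
  have hE : (∑ e' : (contractPlus G x ρ e₁ e₂ u w).E,
      (mapFlow G x ρ e₁ e₂ u w f c 0 e') ^ 2) ≤ ∑ e : G.E, (f e) ^ 2 := by
    rw [energy_contract G x ρ u w e₁ e₂ h12, hsq]
    nlinarith [sq_nonneg (f e₂)]
  calc (contractPlus G x ρ e₁ e₂ u w).effRes ρ z
      ≤ ENNReal.ofReal (∑ e' : (contractPlus G x ρ e₁ e₂ u w).E,
          (mapFlow G x ρ e₁ e₂ u w f c 0 e') ^ 2) := effRes_le_flow _ _ hg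
    _ ≤ ENNReal.ofReal (∑ e : G.E, (f e) ^ 2) := ENNReal.ofReal_le_ofReal hE
    _ ≤ G.effRes ρ z + ε := hfle

end Proof15Res


section Proof15Trio

open Finset Multigraph

variable {V : Type} [Fintype V] [DecidableEq V]

lemma core_ineq (p1 p2 q1 r1 U W : ℝ) (hp : p1 + p2 = -1)
    (hU : q1^2 + q1^2 + (q1 - 1)^2 + q1^2 ≤ U)
    (hW : r1^2 + r1^2 + r1^2 + (-1 - r1)^2 ≤ W) :
    101/100 ≤ q1^2 + p2^2 + W ∨ 101/100 ≤ r1^2 + p1^2 + U := by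
  by_contra hcon
  push_neg at hcon
  nlinarith [hcon.1, hcon.2, sq_nonneg (5*q1 - 1), sq_nonneg (5*r1 + 1), sq_nonneg (p1 - p2)]

lemma trio (G : Multigraph V) (ρ x u w : V) (e₁ e₂ e₃ e₄ : G.E)
    (hρx : ρ ≠ x) (hρu : ρ ≠ u) (hρw : ρ ≠ w)
    (hxu : x ≠ u) (hxw : x ≠ w) (huw : u ≠ w)
    (h12 : e₁ ≠ e₂) (h13 : e₁ ≠ e₃) (h14 : e₁ ≠ e₄) (h23 : e₂ ≠ e₃) (h24 : e₂ ≠ e₄)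
    (h34 : e₃ ≠ e₄)
    (hE1 : G.Ends e₁ x u) (hE2 : G.Ends e₂ x w)
    (hH3 : G.Hits1 e₃ u) (hH4 : G.Hits1 e₄ w)
    (Ox : ∀ e, e ≠ e₁ → e ≠ e₂ → G.fst e ≠ x ∧ G.snd e ≠ x)
    (Ou : ∀ e, e ≠ e₁ → e ≠ e₃ → G.fst e ≠ u ∧ G.snd e ≠ u)
    (Ow : ∀ e, e ≠ e₂ → e ≠ e₄ → G.fst e ≠ w ∧ G.snd e ≠ w) :
    (contractPlus G x ρ e₁ e₂ u w).effRes ρ x + (contractPlus G x ρ e₁ e₂ u w).effRes ρ u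
      + (contractPlus G x ρ e₁ e₂ u w).effRes ρ w + ENNReal.ofReal (1/100)
      ≤ G.effRes ρ x + G.effRes ρ u + G.effRes ρ w := by
  -- the resistance from the root to `x` in the contracted graph is at most 1 (leaf edge)
  have hleaf : (contractPlus G x ρ e₁ e₂ u w).effRes ρ x ≤ ENNReal.ofReal 1 := by
    have hzero : ∀ v, G.netFlow (fun _ => (0:ℝ)) v = 0 := by
      intro v; simp [netFlow]
    have hout : ∀ (e : G.E) v, G.out (fun _ => (0:ℝ)) e v = 0 := by
      intro e v; simp [out]
    have hg := isUnitFlow_mapFlow G h12 hE1 hE2 hρx hρu hρw hxu hxw huw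
      (fun _ => 0) 0 (-1) x (Ne.symm hρx)
      (by rw [hzero]; norm_num)
      (fun hxx => absurd rfl hxx)
      (fun _ => by rw [hzero, hout]; ring)
      (fun _ => by rw [hzero, hout]; ring)
      (fun v _ _ _ _ _ => hzero v)
    have hEn : (∑ e' : (contractPlus G x ρ e₁ e₂ u w).E,
        (mapFlow G x ρ e₁ e₂ u w (fun _ => 0) 0 (-1) e') ^ 2) = 1 := by
      rw [energy_contract G x ρ u w e₁ e₂ h12]; simp
    calc (contractPlus G x ρ e₁ e₂ u w).effRes ρ x
        ≤ ENNReal.ofReal (∑ e' : (contractPlus G x ρ e₁ e₂ u w).E,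
            (mapFlow G x ρ e₁ e₂ u w (fun _ => 0) 0 (-1) e') ^ 2) := effRes_le_flow _ _ hg
      _ = ENNReal.ofReal 1 := by rw [hEn]
  by_cases hTx : G.effRes ρ x = ⊤
  · have hT : G.effRes ρ x + G.effRes ρ u + G.effRes ρ w = ⊤ := by simp [hTx]
    rw [hT]; exact le_top
  by_cases hTu : G.effRes ρ u = ⊤
  · have hT : G.effRes ρ x + G.effRes ρ u + G.effRes ρ w = ⊤ := by simp [hTu]
    rw [hT]; exact le_top
  by_cases hTw : G.effRes ρ w = ⊤
  · have hT : G.effRes ρ x + G.effRes ρ u + G.effRes ρ w = ⊤ := by simp [hTw]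
    rw [hT]; exact le_top
  apply ENNReal.le_of_forall_pos_le_add
  intro ε hε _
  set δ : ℝ≥0∞ := (ε : ℝ≥0∞) / 3 with hδdef
  have hδ : δ ≠ 0 := by
    rw [hδdef]
    simp [ENNReal.div_eq_zero_iff, hε.ne']
  have hδsum : δ + δ + δ = (ε : ℝ≥0∞) := by
    rw [hδdef, ENNReal.div_add_div_same, ENNReal.div_add_div_same]
    rw [show (ε : ℝ≥0∞) + ε + ε = 3 * ε by ring, mul_comm (3 : ℝ≥0∞) (ε : ℝ≥0∞),
      mul_div_assoc]
    rw [show ((3 : ℝ≥0∞) / 3) = 1 from ENNReal.div_self (by norm_num) (by norm_num), mul_one]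
  obtain ⟨fx, hufx, hfxle⟩ := exists_flow_le G hρx hTx hδ
  obtain ⟨fu, hufu, hfule⟩ := exists_flow_le G hρu hTu hδ
  obtain ⟨fw, hufw, hfwle⟩ := exists_flow_le G hρw hTw hδ
  -- facts about fx
  have hxK : G.netFlow fx x = G.out fx e₁ x + G.out fx e₂ x := G.netFlow_pair fx h12 Ox
  have hxsink : G.netFlow fx x = -1 := netFlow_sink hufx hρx
  have hpsum : G.out fx e₁ x + G.out fx e₂ x = -1 := by linarith
  have hxu0 : G.netFlow fx u = 0 := hufx.2 u (Ne.symm hρu) (Ne.symm hxu)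
  have hxuK : G.netFlow fx u = G.out fx e₁ u + G.out fx e₃ u := G.netFlow_pair fx h13 Ou
  have hxo1u : G.out fx e₁ u = - G.out fx e₁ x := out_other hE1 hxu fx
  have hxo3u : G.out fx e₃ u = G.out fx e₁ x := by linarith
  have hxw0 : G.netFlow fx w = 0 := hufx.2 w (Ne.symm hρw) (Ne.symm hxw)
  have hxwK : G.netFlow fx w = G.out fx e₂ w + G.out fx e₄ w := G.netFlow_pair fx h24 Ow
  have hxo2w : G.out fx e₂ w = - G.out fx e₂ x := out_other hE2 hxw fx
  have hxo4w : G.out fx e₄ w = G.out fx e₂ x := by linarith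
  have hsq1x : (fx e₁)^2 = (G.out fx e₁ x)^2 := ((hE1.hits1 hxu).out_sq fx).symm
  have hsq2x : (fx e₂)^2 = (G.out fx e₂ x)^2 := ((hE2.hits1 hxw).out_sq fx).symm
  -- facts about fu
  have huxK : G.netFlow fu x = G.out fu e₁ x + G.out fu e₂ x := G.netFlow_pair fu h12 Ox
  have hux0 : G.netFlow fu x = 0 := hufu.2 x (Ne.symm hρx) hxu
  have huuK : G.netFlow fu u = G.out fu e₁ u + G.out fu e₃ u := G.netFlow_pair fu h13 Ou
  have huusink : G.netFlow fu u = -1 := netFlow_sink hufu hρu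
  have huo1u : G.out fu e₁ u = - G.out fu e₁ x := out_other hE1 hxu fu
  have huo3u : G.out fu e₃ u = -1 + G.out fu e₁ x := by linarith
  have huw0 : G.netFlow fu w = 0 := hufu.2 w (Ne.symm hρw) (Ne.symm huw)
  have huwK : G.netFlow fu w = G.out fu e₂ w + G.out fu e₄ w := G.netFlow_pair fu h24 Ow
  have huo2x : G.out fu e₂ x = - G.out fu e₁ x := by linarith
  have huo2w : G.out fu e₂ w = G.out fu e₁ x := by
    rw [out_other hE2 hxw fu, huo2x]; ring
  have huo4w : G.out fu e₄ w = - G.out fu e₁ x := by linarith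
  -- facts about fw
  have hwxK : G.netFlow fw x = G.out fw e₁ x + G.out fw e₂ x := G.netFlow_pair fw h12 Ox
  have hwx0 : G.netFlow fw x = 0 := hufw.2 x (Ne.symm hρx) hxw
  have hwuK : G.netFlow fw u = G.out fw e₁ u + G.out fw e₃ u := G.netFlow_pair fw h13 Ou
  have hwu0 : G.netFlow fw u = 0 := hufw.2 u (Ne.symm hρu) huw
  have hwo1u : G.out fw e₁ u = - G.out fw e₁ x := out_other hE1 hxu fw
  have hwo3u : G.out fw e₃ u = G.out fw e₁ x := by linarith
  have hwwK : G.netFlow fw w = G.out fw e₂ w + G.out fw e₄ w := G.netFlow_pair fw h24 Ow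
  have hwwsink : G.netFlow fw w = -1 := netFlow_sink hufw hρw
  have hwo2x : G.out fw e₂ x = - G.out fw e₁ x := by linarith
  have hwo2w : G.out fw e₂ w = G.out fw e₁ x := by
    rw [out_other hE2 hxw fw, hwo2x]; ring
  have hwo4w : G.out fw e₄ w = -1 - G.out fw e₁ x := by linarith
  -- energy lower bounds
  have hU : (G.out fu e₁ x)^2 + (G.out fu e₁ x)^2 + (G.out fu e₁ x - 1)^2
      + (G.out fu e₁ x)^2 ≤ ∑ e : G.E, (fu e)^2 := by
    have hef := G.energy_four fu h12 h13 h14 h23 h24 h34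
    have a1 : (fu e₁)^2 = (G.out fu e₁ x)^2 := ((hE1.hits1 hxu).out_sq fu).symm
    have a2 : (fu e₂)^2 = (G.out fu e₁ x)^2 := by
      rw [← (hE2.hits1 hxw).out_sq fu, huo2x]; ring
    have a3 : (fu e₃)^2 = (G.out fu e₁ x - 1)^2 := by
      rw [← hH3.out_sq fu, huo3u]; ring
    have a4 : (fu e₄)^2 = (G.out fu e₁ x)^2 := by
      rw [← hH4.out_sq fu, huo4w]; ring
    linarith
  have hW : (G.out fw e₁ x)^2 + (G.out fw e₁ x)^2 + (G.out fw e₁ x)^2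
      + (-1 - G.out fw e₁ x)^2 ≤ ∑ e : G.E, (fw e)^2 := by
    have hef := G.energy_four fw h12 h13 h14 h23 h24 h34
    have a1 : (fw e₁)^2 = (G.out fw e₁ x)^2 := ((hE1.hits1 hxu).out_sq fw).symm
    have a2 : (fw e₂)^2 = (G.out fw e₁ x)^2 := by
      rw [← (hE2.hits1 hxw).out_sq fw, hwo2x]; ring
    have a3 : (fw e₃)^2 = (G.out fw e₁ x)^2 := by
      rw [← hH3.out_sq fw, hwo3u]
    have a4 : (fw e₄)^2 = (-1 - G.out fw e₁ x)^2 := by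
      rw [← hH4.out_sq fw, hwo4w]
    linarith
  have hq1ne : (G.out fu e₁ x - 1)^2 = (G.out fu e₁ x)^2 - 2*(G.out fu e₁ x) + 1 := by ring
  rcases core_ineq (G.out fx e₁ x) (G.out fx e₂ x) (G.out fu e₁ x) (G.out fw e₁ x)
      (∑ e : G.E, (fu e)^2) (∑ e : G.E, (fw e)^2) hpsum (by linarith [hU, hq1ne]) hW
    with hcase | hcase
  · -- use flow fu mapped for u, flow fx mapped for w
    have hgu := isUnitFlow_mapFlow G h12 hE1 hE2 hρx hρu hρw hxu hxw huw
      fu (- G.out fu e₁ x) 0 u (Ne.symm hρu)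
      (by rw [sub_zero]; exact hufu.1)
      (fun _ => by linarith)
      (fun huu => absurd rfl huu)
      (fun _ => by linarith)
      (fun v hvρ hvu _ _ _ => hufu.2 v hvρ hvu)
    have hgw := isUnitFlow_mapFlow G h12 hE1 hE2 hρx hρu hρw hxu hxw huw
      fx (- G.out fx e₁ x) 0 w (Ne.symm hρw)
      (by rw [sub_zero]; exact hufx.1)
      (fun _ => by linarith)
      (fun _ => by linarith)
      (fun hww => absurd rfl hww)
      (fun v hvρ _ hvx _ _ => hufx.2 v hvρ hvx)
    have hEgu : (∑ e' : (contractPlus G x ρ e₁ e₂ u w).E,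
        (mapFlow G x ρ e₁ e₂ u w fu (- G.out fu e₁ x) 0 e') ^ 2)
        = (∑ e : G.E, (fu e)^2) - (G.out fu e₁ x)^2 := by
      rw [energy_contract G x ρ u w e₁ e₂ h12]
      have a1 : (fu e₁)^2 = (G.out fu e₁ x)^2 := ((hE1.hits1 hxu).out_sq fu).symm
      have a2 : (fu e₂)^2 = (G.out fu e₁ x)^2 := by
        rw [← (hE2.hits1 hxw).out_sq fu, huo2x]; ring
      rw [a1, a2]; ring
    have hEgw : (∑ e' : (contractPlus G x ρ e₁ e₂ u w).E,
        (mapFlow G x ρ e₁ e₂ u w fx (- G.out fx e₁ x) 0 e') ^ 2)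
        = (∑ e : G.E, (fx e)^2) - (G.out fx e₂ x)^2 := by
      rw [energy_contract G x ρ u w e₁ e₂ h12, hsq1x, hsq2x]; ring
    have hposu : (0:ℝ) ≤ (∑ e : G.E, (fu e)^2) - (G.out fu e₁ x)^2 := by
      rw [← hEgu]; exact energy_nonneg _ _
    have hposw : (0:ℝ) ≤ (∑ e : G.E, (fx e)^2) - (G.out fx e₂ x)^2 := by
      rw [← hEgw]; exact energy_nonneg _ _
    have hru : (contractPlus G x ρ e₁ e₂ u w).effRes ρ u
        ≤ ENNReal.ofReal ((∑ e : G.E, (fu e)^2) - (G.out fu e₁ x)^2) := by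
      rw [← hEgu]; exact effRes_le_flow _ _ hgu
    have hrw : (contractPlus G x ρ e₁ e₂ u w).effRes ρ w
        ≤ ENNReal.ofReal ((∑ e : G.E, (fx e)^2) - (G.out fx e₂ x)^2) := by
      rw [← hEgw]; exact effRes_le_flow _ _ hgw
    have hreal : (1:ℝ) + ((∑ e : G.E, (fu e)^2) - (G.out fu e₁ x)^2)
        + ((∑ e : G.E, (fx e)^2) - (G.out fx e₂ x)^2) + 1/100
        ≤ (∑ e : G.E, (fx e)^2) + (∑ e : G.E, (fu e)^2) + (∑ e : G.E, (fw e)^2) := by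
      linarith [hcase]
    calc (contractPlus G x ρ e₁ e₂ u w).effRes ρ x + (contractPlus G x ρ e₁ e₂ u w).effRes ρ u
        + (contractPlus G x ρ e₁ e₂ u w).effRes ρ w + ENNReal.ofReal (1/100)
        ≤ ENNReal.ofReal 1
            + ENNReal.ofReal ((∑ e : G.E, (fu e)^2) - (G.out fu e₁ x)^2)
            + ENNReal.ofReal ((∑ e : G.E, (fx e)^2) - (G.out fx e₂ x)^2)
            + ENNReal.ofReal (1/100) := by
          exact add_le_add (add_le_add (add_le_add hleaf hru) hrw) le_rfl
      _ = ENNReal.ofReal ((1:ℝ) + ((∑ e : G.E, (fu e)^2) - (G.out fu e₁ x)^2)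
            + ((∑ e : G.E, (fx e)^2) - (G.out fx e₂ x)^2) + 1/100) := by
          rw [← ENNReal.ofReal_add (by norm_num) hposu,
            ← ENNReal.ofReal_add (by linarith) hposw,
            ← ENNReal.ofReal_add (by linarith) (by norm_num)]
      _ ≤ ENNReal.ofReal ((∑ e : G.E, (fx e)^2) + (∑ e : G.E, (fu e)^2)
            + (∑ e : G.E, (fw e)^2)) := ENNReal.ofReal_le_ofReal hreal
      _ ≤ ENNReal.ofReal (∑ e : G.E, (fx e)^2) + ENNReal.ofReal (∑ e : G.E, (fu e)^2)
            + ENNReal.ofReal (∑ e : G.E, (fw e)^2) :=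
          le_trans (ENNReal.ofReal_add_le) (add_le_add ENNReal.ofReal_add_le le_rfl)
      _ ≤ (G.effRes ρ x + δ) + (G.effRes ρ u + δ) + (G.effRes ρ w + δ) :=
          add_le_add (add_le_add hfxle hfule) hfwle
      _ = G.effRes ρ x + G.effRes ρ u + G.effRes ρ w + (δ + δ + δ) := by ring
      _ = G.effRes ρ x + G.effRes ρ u + G.effRes ρ w + ε := by rw [hδsum]
  · -- use flow fx mapped for u, flow fw mapped for w
    have hgu := isUnitFlow_mapFlow G h12 hE1 hE2 hρx hρu hρw hxu hxw huw
      fx (G.out fx e₂ x) 0 u (Ne.symm hρu)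
      (by rw [sub_zero]; exact hufx.1)
      (fun _ => by linarith)
      (fun huu => absurd rfl huu)
      (fun _ => by linarith)
      (fun v hvρ _ hvx _ _ => hufx.2 v hvρ hvx)
    have hgw := isUnitFlow_mapFlow G h12 hE1 hE2 hρx hρu hρw hxu hxw huw
      fw (- G.out fw e₁ x) 0 w (Ne.symm hρw)
      (by rw [sub_zero]; exact hufw.1)
      (fun _ => by linarith)
      (fun _ => by linarith)
      (fun hww => absurd rfl hww)
      (fun v hvρ hvw _ _ _ => hufw.2 v hvρ hvw)
    have hEgu : (∑ e' : (contractPlus G x ρ e₁ e₂ u w).E,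
        (mapFlow G x ρ e₁ e₂ u w fx (G.out fx e₂ x) 0 e') ^ 2)
        = (∑ e : G.E, (fx e)^2) - (G.out fx e₁ x)^2 := by
      rw [energy_contract G x ρ u w e₁ e₂ h12, hsq1x, hsq2x]; ring
    have hEgw : (∑ e' : (contractPlus G x ρ e₁ e₂ u w).E,
        (mapFlow G x ρ e₁ e₂ u w fw (- G.out fw e₁ x) 0 e') ^ 2)
        = (∑ e : G.E, (fw e)^2) - (G.out fw e₁ x)^2 := by
      rw [energy_contract G x ρ u w e₁ e₂ h12]
      have a1 : (fw e₁)^2 = (G.out fw e₁ x)^2 := ((hE1.hits1 hxu).out_sq fw).symm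
      have a2 : (fw e₂)^2 = (G.out fw e₁ x)^2 := by
        rw [← (hE2.hits1 hxw).out_sq fw, hwo2x]; ring
      rw [a1, a2]; ring
    have hposu : (0:ℝ) ≤ (∑ e : G.E, (fx e)^2) - (G.out fx e₁ x)^2 := by
      rw [← hEgu]; exact energy_nonneg _ _
    have hposw : (0:ℝ) ≤ (∑ e : G.E, (fw e)^2) - (G.out fw e₁ x)^2 := by
      rw [← hEgw]; exact energy_nonneg _ _
    have hru : (contractPlus G x ρ e₁ e₂ u w).effRes ρ u
        ≤ ENNReal.ofReal ((∑ e : G.E, (fx e)^2) - (G.out fx e₁ x)^2) := by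
      rw [← hEgu]; exact effRes_le_flow _ _ hgu
    have hrw : (contractPlus G x ρ e₁ e₂ u w).effRes ρ w
        ≤ ENNReal.ofReal ((∑ e : G.E, (fw e)^2) - (G.out fw e₁ x)^2) := by
      rw [← hEgw]; exact effRes_le_flow _ _ hgw
    have hreal : (1:ℝ) + ((∑ e : G.E, (fx e)^2) - (G.out fx e₁ x)^2)
        + ((∑ e : G.E, (fw e)^2) - (G.out fw e₁ x)^2) + 1/100
        ≤ (∑ e : G.E, (fx e)^2) + (∑ e : G.E, (fu e)^2) + (∑ e : G.E, (fw e)^2) := by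
      linarith [hcase]
    calc (contractPlus G x ρ e₁ e₂ u w).effRes ρ x + (contractPlus G x ρ e₁ e₂ u w).effRes ρ u
        + (contractPlus G x ρ e₁ e₂ u w).effRes ρ w + ENNReal.ofReal (1/100)
        ≤ ENNReal.ofReal 1
            + ENNReal.ofReal ((∑ e : G.E, (fx e)^2) - (G.out fx e₁ x)^2)
            + ENNReal.ofReal ((∑ e : G.E, (fw e)^2) - (G.out fw e₁ x)^2)
            + ENNReal.ofReal (1/100) := by
          exact add_le_add (add_le_add (add_le_add hleaf hru) hrw) le_rfl
      _ = ENNReal.ofReal ((1:ℝ) + ((∑ e : G.E, (fx e)^2) - (G.out fx e₁ x)^2)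
            + ((∑ e : G.E, (fw e)^2) - (G.out fw e₁ x)^2) + 1/100) := by
          rw [← ENNReal.ofReal_add (by norm_num) hposu,
            ← ENNReal.ofReal_add (by linarith) hposw,
            ← ENNReal.ofReal_add (by linarith) (by norm_num)]
      _ ≤ ENNReal.ofReal ((∑ e : G.E, (fx e)^2) + (∑ e : G.E, (fu e)^2)
            + (∑ e : G.E, (fw e)^2)) := ENNReal.ofReal_le_ofReal hreal
      _ ≤ ENNReal.ofReal (∑ e : G.E, (fx e)^2) + ENNReal.ofReal (∑ e : G.E, (fu e)^2)
            + ENNReal.ofReal (∑ e : G.E, (fw e)^2) :=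
          le_trans (ENNReal.ofReal_add_le) (add_le_add ENNReal.ofReal_add_le le_rfl)
      _ ≤ (G.effRes ρ x + δ) + (G.effRes ρ u + δ) + (G.effRes ρ w + δ) :=
          add_le_add (add_le_add hfxle hfule) hfwle
      _ = G.effRes ρ x + G.effRes ρ u + G.effRes ρ w + (δ + δ + δ) := by ring
      _ = G.effRes ρ x + G.effRes ρ u + G.effRes ρ w + ε := by rw [hδsum]

end Proof15Trio


section Proof15Comb

open Finset Multigraph

variable {V : Type} [Fintype V] [DecidableEq V]

lemma degree_eq_sum (G : Multigraph V) (v : V) :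
    G.degree v = ∑ e : G.E, ((if G.fst e = v then 1 else 0) + (if G.snd e = v then 1 else 0)) := by
  unfold Multigraph.degree
  rw [Finset.sum_add_distrib]
  congr 1 <;> rw [Finset.card_filter]

lemma sum_degree (G : Multigraph V) : ∑ v : V, G.degree v = 2 * G.edgeCount := by
  have h : ∀ e : G.E, (∑ v : V, ((if G.fst e = v then 1 else 0)
      + (if G.snd e = v then 1 else 0))) = 2 := by
    intro e
    rw [Finset.sum_add_distrib]
    simp [Finset.sum_ite_eq]
  calc ∑ v : V, G.degree v
      = ∑ v : V, ∑ e : G.E, ((if G.fst e = v then 1 else 0)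
          + (if G.snd e = v then 1 else 0)) := by
        exact Finset.sum_congr rfl fun v _ => degree_eq_sum G v
    _ = ∑ e : G.E, ∑ v : V, ((if G.fst e = v then 1 else 0)
          + (if G.snd e = v then 1 else 0)) := Finset.sum_comm
    _ = ∑ _e : G.E, 2 := Finset.sum_congr rfl fun e _ => h e
    _ = 2 * G.edgeCount := by
        rw [Finset.sum_const, Finset.card_univ]
        unfold Multigraph.edgeCount
        ring

lemma one_le_degree_of_adj (G : Multigraph V) {v c : V} (h : G.Adj v c) : 1 ≤ G.degree v := by
  obtain ⟨e, he⟩ := h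
  unfold Multigraph.degree
  rcases he with ⟨h1, _⟩ | ⟨_, h2⟩
  · have hmem : e ∈ Finset.univ.filter (fun e => G.fst e = v) := by simp [h1]
    have := Finset.card_pos.mpr ⟨e, hmem⟩
    omega
  · have hmem : e ∈ Finset.univ.filter (fun e => G.snd e = v) := by simp [h2]
    have := Finset.card_pos.mpr ⟨e, hmem⟩
    omega

lemma mgClosure (G : Multigraph V) (S : Set V)
    (hS : ∀ e : G.E, (G.fst e ∈ S ↔ G.snd e ∈ S)) {p q : V}
    (h : Relation.ReflTransGen G.Adj p q) (hp : p ∈ S) : q ∈ S := by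
  induction h with
  | refl => exact hp
  | tail _ hadj ih =>
      obtain ⟨e, he⟩ := hadj
      rcases he with ⟨h1, h2⟩ | ⟨h1, h2⟩
      · rw [← h2, ← hS e, h1]; exact ih
      · rw [← h1, hS e, h2]; exact ih

lemma exists_exit (G : Multigraph V) {v q : V} (hvq : v ≠ q)
    (h : Relation.ReflTransGen G.Adj v q) : ∃ (e : G.E) (z : V), z ≠ v ∧ G.Ends e v z := by
  by_contra hc
  push_neg at hc
  have hS : ∀ e : G.E, (G.fst e ∈ ({v} : Set V) ↔ G.snd e ∈ ({v} : Set V)) := by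
    intro e
    simp only [Set.mem_singleton_iff]
    constructor
    · intro hf
      by_contra hs
      exact (hc e (G.snd e)) hs (Or.inl ⟨hf, rfl⟩)
    · intro hs
      by_contra hf
      exact (hc e (G.fst e)) hf (Or.inr ⟨rfl, hs⟩)
  have := mgClosure G {v} hS h rfl
  exact hvq (this.symm)

lemma exists_second_edge (G : Multigraph V) {v : V} {e₁ : G.E} (hdeg : G.degree v = 2)
    (h1 : G.Hits1 e₁ v) :
    ∃ e₂, e₂ ≠ e₁ ∧ G.Hits1 e₂ v ∧
      ∀ e, e ≠ e₁ → e ≠ e₂ → G.fst e ≠ v ∧ G.snd e ≠ v := by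
  classical
  set nv : G.E → ℕ := fun e => (if G.fst e = v then 1 else 0) + (if G.snd e = v then 1 else 0)
    with hnv
  have hsum : ∑ e : G.E, nv e = 2 := by rw [← degree_eq_sum]; exact hdeg
  have hn1 : nv e₁ = 1 := by
    rcases h1 with ⟨a, b⟩ | ⟨a, b⟩ <;> simp [hnv, a, b]
  have hrest : ∑ e ∈ Finset.univ.erase e₁, nv e = 1 := by
    have h := Finset.add_sum_erase Finset.univ nv (Finset.mem_univ e₁)
    omega
  have hex : ∃ e ∈ Finset.univ.erase e₁, nv e ≠ 0 := by
    by_contra hcon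
    push_neg at hcon
    rw [Finset.sum_eq_zero hcon] at hrest
    omega
  obtain ⟨e₂, he₂mem, he₂⟩ := hex
  have hne : e₂ ≠ e₁ := (Finset.mem_erase.mp he₂mem).1
  have hrest2 : nv e₂ + ∑ e ∈ (Finset.univ.erase e₁).erase e₂, nv e = 1 := by
    rw [Finset.add_sum_erase _ _ he₂mem]; exact hrest
  have hn2 : nv e₂ = 1 := by omega
  have hzero : ∀ e ∈ (Finset.univ.erase e₁).erase e₂, nv e = 0 := by
    intro e he
    have hz : ∑ e ∈ (Finset.univ.erase e₁).erase e₂, nv e = 0 := by omega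
    exact (Finset.sum_eq_zero_iff.mp hz) e he
  refine ⟨e₂, hne, ?_, ?_⟩
  · unfold Multigraph.Hits1
    by_cases hf : G.fst e₂ = v
    · by_cases hs : G.snd e₂ = v
      · exfalso; simp [hnv, hf, hs] at hn2
      · exact Or.inl ⟨hf, hs⟩
    · by_cases hs : G.snd e₂ = v
      · exact Or.inr ⟨hs, hf⟩
      · exfalso; simp [hnv, hf, hs] at hn2
  · intro e hne1 hne2
    have he : e ∈ (Finset.univ.erase e₁).erase e₂ := by
      simp [Finset.mem_erase, hne1, hne2]
    have h0 := hzero e he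
    constructor
    · by_contra h; simp [hnv, h] at h0
    · by_contra h; simp [hnv, h] at h0

lemma hits1_zero {G : Multigraph V} {e : G.E} {v : V}
    (hO : G.fst e ≠ v ∧ G.snd e ≠ v) : ¬ G.Hits1 e v := by
  rintro (⟨h1, _⟩ | ⟨h1, _⟩)
  · exact hO.1 h1
  · exact hO.2 h1

/-- There is a vertex of degree 2, distinct from the root, all of whose
neighbours have degree 2 and are distinct from the root. -/
lemma exists_good (n : ℕ) (G : Multigraph (Fin (n + 1))) (ρ : Fin (n + 1))
    (hdeg2 : ∀ v, 2 ≤ G.degree v) (hm : 8 * G.edgeCount < 9 * n) :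
    ∃ x, (G.degree x = 2 ∧ x ≠ ρ) ∧
      ∀ e : G.E, (G.fst e = x → (G.degree (G.snd e) = 2 ∧ G.snd e ≠ ρ)) ∧
                 (G.snd e = x → (G.degree (G.fst e) = 2 ∧ G.fst e ≠ ρ)) := by
  classical
  by_contra hcon
  set P : Fin (n + 1) → Prop := fun v => G.degree v = 2 ∧ v ≠ ρ with hP
  set D : Finset (Fin (n + 1)) := Finset.univ.filter (fun v => P v) with hD
  set T : Finset (Fin (n + 1)) := Finset.univ.filter (fun v => ¬ P v) with hT
  have hDmem : ∀ x ∈ D, P x := fun x hx => (Finset.mem_filter.mp hx).2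
  have hchoice : ∀ x ∈ D, ∃ e : G.E,
      (G.fst e = x ∧ ¬ P (G.snd e)) ∨ (G.snd e = x ∧ ¬ P (G.fst e)) := by
    intro x hx
    by_contra hno
    push_neg at hno
    apply hcon
    refine ⟨x, hDmem x hx, fun e => ?_⟩
    exact ⟨(hno e).1, (hno e).2⟩
  -- a default edge exists
  have hEne : Nonempty G.E := by
    by_contra hE
    have h0 : G.degree ρ = 0 := by
      unfold Multigraph.degree
      rw [Finset.filter_eq_empty_iff.mpr (fun e _ => absurd ⟨e⟩ hE),
        Finset.filter_eq_empty_iff.mpr (fun e _ => absurd ⟨e⟩ hE)]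
      simp
    have := hdeg2 ρ
    omega
  have hinj : D.card ≤ (Finset.univ.filter
      (fun e : G.E => ¬ P (G.fst e) ∨ ¬ P (G.snd e))).card := by
    classical
    obtain ⟨e₀⟩ := hEne
    set φ : Fin (n + 1) → G.E := fun x =>
      if hx : ∃ e : G.E, (G.fst e = x ∧ ¬ P (G.snd e)) ∨ (G.snd e = x ∧ ¬ P (G.fst e))
      then hx.choose else e₀ with hφ
    have hφspec : ∀ x ∈ D, (G.fst (φ x) = x ∧ ¬ P (G.snd (φ x)))
        ∨ (G.snd (φ x) = x ∧ ¬ P (G.fst (φ x))) := by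
      intro x hx
      have hex := hchoice x hx
      rw [hφ]
      simp only [dif_pos hex]
      exact hex.choose_spec
    apply Finset.card_le_card_of_injOn φ
    · intro x hx
      rcases hφspec x hx with ⟨_, h2⟩ | ⟨_, h2⟩
      · simp [h2]
      · simp [h2]
    · intro a ha b hb hab
      rcases hφspec a ha with ⟨ha1, ha2⟩ | ⟨ha1, ha2⟩ <;>
        rcases hφspec b hb with ⟨hb1, hb2⟩ | ⟨hb1, hb2⟩
      · rw [← ha1, ← hb1, hab]
      · exfalso; apply hb2; rw [← hab, ha1]; exact hDmem a ha
      · exfalso; apply ha2; rw [hab, hb1]; exact hDmem b hb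
      · rw [← ha1, ← hb1, hab]
  have hsplit : (Finset.univ.filter (fun e : G.E => ¬ P (G.fst e) ∨ ¬ P (G.snd e))).card
      ≤ (Finset.univ.filter (fun e : G.E => ¬ P (G.fst e))).card
        + (Finset.univ.filter (fun e : G.E => ¬ P (G.snd e))).card := by
    rw [Finset.filter_or]
    exact Finset.card_union_le _ _
  have hfst : (Finset.univ.filter (fun e : G.E => ¬ P (G.fst e))).card
      ≤ ∑ v ∈ T, (Finset.univ.filter (fun e : G.E => G.fst e = v)).card := by
    rw [Finset.card_eq_sum_card_fiberwise (f := G.fst) (t := T)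
      (fun e he => Finset.mem_filter.mpr ⟨Finset.mem_univ _, (Finset.mem_filter.mp he).2⟩)]
    apply Finset.sum_le_sum
    intro v _
    apply Finset.card_le_card
    intro e he
    exact Finset.mem_filter.mpr ⟨Finset.mem_univ _, (Finset.mem_filter.mp he).2⟩
  have hsnd : (Finset.univ.filter (fun e : G.E => ¬ P (G.snd e))).card
      ≤ ∑ v ∈ T, (Finset.univ.filter (fun e : G.E => G.snd e = v)).card := by
    rw [Finset.card_eq_sum_card_fiberwise (f := G.snd) (t := T)
      (fun e he => Finset.mem_filter.mpr ⟨Finset.mem_univ _, (Finset.mem_filter.mp he).2⟩)]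
    apply Finset.sum_le_sum
    intro v _
    apply Finset.card_le_card
    intro e he
    exact Finset.mem_filter.mpr ⟨Finset.mem_univ _, (Finset.mem_filter.mp he).2⟩
  have hbound : D.card ≤ ∑ v ∈ T, G.degree v := by
    calc D.card ≤ _ := hinj
      _ ≤ _ := hsplit
      _ ≤ (∑ v ∈ T, (Finset.univ.filter (fun e : G.E => G.fst e = v)).card)
          + ∑ v ∈ T, (Finset.univ.filter (fun e : G.E => G.snd e = v)).card :=
            add_le_add hfst hsnd
      _ = ∑ v ∈ T, G.degree v := by
        rw [← Finset.sum_add_distrib]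
        exact Finset.sum_congr rfl fun v _ => rfl
  have hcards : D.card + T.card = n + 1 := by
    rw [hD, hT, Finset.card_filter_add_card_filter_not]
    simp
  have hsplitdeg : ∑ v ∈ D, G.degree v + ∑ v ∈ T, G.degree v = 2 * G.edgeCount := by
    rw [Finset.sum_filter_add_sum_filter_not Finset.univ (fun v => P v) G.degree]
    exact sum_degree G
  have hDdeg : ∑ v ∈ D, G.degree v = 2 * D.card := by
    rw [Finset.sum_congr rfl (fun v hv => (hDmem v hv).1), Finset.sum_const, smul_eq_mul,
      mul_comm]
  have hρT : ρ ∈ T := by simp [hT, hP]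
  have hT3 : 3 * T.card ≤ ∑ v ∈ T, G.degree v + 1 := by
    rw [← Finset.add_sum_erase _ _ hρT]
    have h3 : ∀ v ∈ T.erase ρ, 3 ≤ G.degree v := by
      intro v hv
      obtain ⟨hvρ, hvT⟩ := Finset.mem_erase.mp hv
      have hnP : ¬ P v := (Finset.mem_filter.mp hvT).2
      have hne2 : G.degree v ≠ 2 := fun h => hnP ⟨h, hvρ⟩
      have := hdeg2 v
      omega
    have hsum3 := Finset.card_nsmul_le_sum (T.erase ρ) G.degree 3 h3
    simp only [smul_eq_mul] at hsum3
    have hsum3' : (T.erase ρ).card * 3 ≤ ∑ x ∈ T.erase ρ, G.degree x := hsum3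
    have hce := Finset.card_erase_of_mem hρT
    have hdρ := hdeg2 ρ
    have hTpos : 1 ≤ T.card := Finset.card_pos.mpr ⟨ρ, hρT⟩
    omega
  omega

end Proof15Comb

/-- **Lemma (a good contraction exists).** Let `G` be a connected rooted graph with `n`
non-root vertices, no leaves, and fewer than `9n/8` edges.  Then there is a vertex `x`
of degree 2, with incident edges `e₁, e₂` and neighbours `y₁, y₂`, such that
`Rtot(G) - Rtot(G⁺/x) ≥ 1/100`, where `G⁺/x` is obtained from `G` by deleting `x`'s two
edges, adding the edge `y₁y₂` (contracting `y₁x`) and attaching a new leaf to the root. -/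
theorem stmt15 (n : ℕ) (G : Multigraph (Fin (n + 1))) (ρ : Fin (n + 1))
    (hconn : G.Connected) (hnoleaf : ∀ v : Fin (n + 1), G.degree v ≠ 1)
    (hm : 8 * G.edgeCount < 9 * n) :
    ∃ (x y₁ y₂ : Fin (n + 1)) (e₁ e₂ : G.E), e₁ ≠ e₂ ∧ G.degree x = 2 ∧
      ((G.fst e₁ = x ∧ G.snd e₁ = y₁) ∨ (G.fst e₁ = y₁ ∧ G.snd e₁ = x)) ∧
      ((G.fst e₂ = x ∧ G.snd e₂ = y₂) ∨ (G.fst e₂ = y₂ ∧ G.snd e₂ = x)) ∧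
      Rtot (contractPlus G x ρ e₁ e₂ y₁ y₂) ρ + ENNReal.ofReal (1 / 100) ≤ Rtot G ρ := by
  classical
  have hdeg2 : ∀ v, 2 ≤ G.degree v := by
    intro v
    obtain ⟨z, hz⟩ := Fintype.exists_ne_of_one_lt_card (by simp; omega) v
    rcases Relation.ReflTransGen.cases_head (hconn v z) with h | ⟨c, hc, _⟩
    · exact absurd h.symm hz
    · have h1 := one_le_degree_of_adj G hc
      have h2 := hnoleaf v
      omega
  obtain ⟨x, ⟨hdx, hxρ⟩, hgood⟩ := exists_good n G ρ hdeg2 hm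
  obtain ⟨e₁, u, hux, hE1⟩ := exists_exit G hxρ (hconn x ρ)
  have hxu : x ≠ u := Ne.symm hux
  have hu2 : G.degree u = 2 ∧ u ≠ ρ := by
    rcases hE1 with ⟨h1, h2⟩ | ⟨h1, h2⟩
    · have := (hgood e₁).1 h1; rwa [h2] at this
    · have := (hgood e₁).2 h2; rwa [h1] at this
  obtain ⟨e₂, h21, hH2x, Ox⟩ := exists_second_edge G hdx (hE1.hits1 hxu)
  obtain ⟨w, hE2, hxw⟩ : ∃ w, G.Ends e₂ x w ∧ x ≠ w := by
    rcases hH2x with ⟨h1, h2⟩ | ⟨h1, h2⟩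
    · exact ⟨G.snd e₂, Or.inl ⟨h1, rfl⟩, fun h => h2 h.symm⟩
    · exact ⟨G.fst e₂, Or.inr ⟨rfl, h1⟩, fun h => h2 h.symm⟩
  have hw2 : G.degree w = 2 ∧ w ≠ ρ := by
    rcases hE2 with ⟨h1, h2⟩ | ⟨h1, h2⟩
    · have := (hgood e₂).1 h1; rwa [h2] at this
    · have := (hgood e₂).2 h2; rwa [h1] at this
  obtain ⟨e₃, h31, hH3u, Ou⟩ := exists_second_edge G hu2.1 ((hE1.symm).hits1 hux)
  have huw : u ≠ w := by
    intro huweq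
    have he23 : e₂ = e₃ := by
      by_contra hne
      have hOu := Ou e₂ h21 hne
      rcases hE2 with ⟨_, h2⟩ | ⟨h1, _⟩
      · exact hOu.2 (h2.trans huweq.symm)
      · exact hOu.1 (h1.trans huweq.symm)
    have hS : ∀ e : G.E, (G.fst e ∈ ({x, u} : Set (Fin (n + 1)))
        ↔ G.snd e ∈ ({x, u} : Set (Fin (n + 1)))) := by
      intro e
      by_cases he1 : e = e₁
      · subst he1; rcases hE1 with ⟨h1, h2⟩ | ⟨h1, h2⟩ <;> simp [h1, h2]
      · by_cases he2 : e = e₂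
        · subst he2
          rcases hE2 with ⟨h1, h2⟩ | ⟨h1, h2⟩ <;> simp [h1, h2, huweq.symm]
        · have hOx := Ox e he1 he2
          have hOu := Ou e he1 (fun h => he2 (h.trans he23.symm))
          simp [hOx.1, hOx.2, hOu.1, hOu.2]
    have hclose := mgClosure G {x, u} hS (hconn x ρ) (Set.mem_insert x _)
    simp only [Set.mem_insert_iff, Set.mem_singleton_iff] at hclose
    rcases hclose with h | h
    · exact hxρ h.symm
    · exact hu2.2 h.symm
  have h32 : e₃ ≠ e₂ := by
    intro h
    have hO : G.fst e₂ ≠ u ∧ G.snd e₂ ≠ u := by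
      rcases hE2 with ⟨h1, h2⟩ | ⟨h1, h2⟩
      · exact ⟨by rw [h1]; exact hxu, by rw [h2]; exact Ne.symm huw⟩
      · exact ⟨by rw [h1]; exact Ne.symm huw, by rw [h2]; exact hxu⟩
    exact hits1_zero hO (by rw [← h]; exact hH3u)
  obtain ⟨a, hE3, hua⟩ : ∃ a, G.Ends e₃ u a ∧ u ≠ a := by
    rcases hH3u with ⟨h1, h2⟩ | ⟨h1, h2⟩
    · exact ⟨G.snd e₃, Or.inl ⟨h1, rfl⟩, fun h => h2 h.symm⟩
    · exact ⟨G.fst e₃, Or.inr ⟨rfl, h1⟩, fun h => h2 h.symm⟩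
  have hax : a ≠ x := by
    have hOx := Ox e₃ h31 h32
    rcases hE3 with ⟨h1, h2⟩ | ⟨h1, h2⟩
    · exact fun h => hOx.2 (h2.trans h)
    · exact fun h => hOx.1 (h1.trans h)
  obtain ⟨e₄, h42, hH4w, Ow⟩ := exists_second_edge G hw2.1 ((hE2.symm).hits1 (Ne.symm hxw))
  have h41 : e₄ ≠ e₁ := by
    intro h
    have hO : G.fst e₁ ≠ w ∧ G.snd e₁ ≠ w := by
      rcases hE1 with ⟨h1, h2⟩ | ⟨h1, h2⟩
      · exact ⟨by rw [h1]; exact hxw, by rw [h2]; exact huw⟩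
      · exact ⟨by rw [h1]; exact huw, by rw [h2]; exact hxw⟩
    exact hits1_zero hO (by rw [← h]; exact hH4w)
  have haw : a ≠ w := by
    intro haweq
    have he34 : e₃ = e₄ := by
      by_contra hne
      have hOw := Ow e₃ h32 hne
      rcases hE3 with ⟨_, h2⟩ | ⟨h1, _⟩
      · exact hOw.2 (h2.trans haweq)
      · exact hOw.1 (h1.trans haweq)
    have hS : ∀ e : G.E, (G.fst e ∈ ({x, u, w} : Set (Fin (n + 1)))
        ↔ G.snd e ∈ ({x, u, w} : Set (Fin (n + 1)))) := by
      intro e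
      by_cases he1 : e = e₁
      · subst he1; rcases hE1 with ⟨h1, h2⟩ | ⟨h1, h2⟩ <;> simp [h1, h2]
      · by_cases he2 : e = e₂
        · subst he2; rcases hE2 with ⟨h1, h2⟩ | ⟨h1, h2⟩ <;> simp [h1, h2]
        · by_cases he3 : e = e₃
          · subst he3
            rcases hE3 with ⟨h1, h2⟩ | ⟨h1, h2⟩ <;> simp [h1, h2, haweq]
          · have hOx := Ox e he1 he2
            have hOu := Ou e he1 he3
            have hOw := Ow e he2 (fun h => he3 (h.trans he34.symm))
            simp [hOx.1, hOx.2, hOu.1, hOu.2, hOw.1, hOw.2]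
    have hclose := mgClosure G {x, u, w} hS (hconn x ρ) (Set.mem_insert x _)
    simp only [Set.mem_insert_iff, Set.mem_singleton_iff] at hclose
    rcases hclose with h | h | h
    · exact hxρ h.symm
    · exact hu2.2 h.symm
    · exact hw2.2 h.symm
  have h34 : e₃ ≠ e₄ := by
    intro h
    have hO : G.fst e₃ ≠ w ∧ G.snd e₃ ≠ w := by
      rcases hE3 with ⟨h1, h2⟩ | ⟨h1, h2⟩
      · exact ⟨by rw [h1]; exact huw, by rw [h2]; exact haw⟩
      · exact ⟨by rw [h1]; exact haw, by rw [h2]; exact huw⟩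
    exact hits1_zero hO (by rw [h]; exact hH4w)
  have h12 : e₁ ≠ e₂ := Ne.symm h21
  have h13 : e₁ ≠ e₃ := Ne.symm h31
  have h14 : e₁ ≠ e₄ := Ne.symm h41
  have h23 : e₂ ≠ e₃ := Ne.symm h32
  have h24 : e₂ ≠ e₄ := Ne.symm h42
  have hρx : ρ ≠ x := Ne.symm hxρ
  have hρu : ρ ≠ u := Ne.symm hu2.2
  have hρw : ρ ≠ w := Ne.symm hw2.2
  refine ⟨x, u, w, e₁, e₂, h12, hdx, hE1, hE2, ?_⟩
  have hkey := trio G ρ x u w e₁ e₂ e₃ e₄ hρx hρu hρw hxu hxw huw h12 h13 h14 h23 h24 h34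
    hE1 hE2 hH3u hH4w Ox Ou Ow
  have hz : ∀ z : Fin (n + 1), z ≠ x → z ≠ u → z ≠ w →
      (contractPlus G x ρ e₁ e₂ u w).effRes ρ z ≤ G.effRes ρ z :=
    fun z => effRes_contract_le G ρ x u w e₁ e₂ h12 hE1 hE2 hρx hρu hρw hxu hxw huw Ox z
  unfold Rtot
  have humem : u ∈ Finset.univ.erase x := Finset.mem_erase.mpr ⟨hux, Finset.mem_univ u⟩
  have hwmem : w ∈ (Finset.univ.erase x).erase u :=
    Finset.mem_erase.mpr ⟨Ne.symm huw, Finset.mem_erase.mpr ⟨Ne.symm hxw, Finset.mem_univ w⟩⟩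
  rw [← Finset.add_sum_erase _ (fun z => (contractPlus G x ρ e₁ e₂ u w).effRes ρ z)
      (Finset.mem_univ x),
    ← Finset.add_sum_erase _ (fun z => (contractPlus G x ρ e₁ e₂ u w).effRes ρ z) humem,
    ← Finset.add_sum_erase _ (fun z => (contractPlus G x ρ e₁ e₂ u w).effRes ρ z) hwmem,
    ← Finset.add_sum_erase _ (fun z => G.effRes ρ z) (Finset.mem_univ x),
    ← Finset.add_sum_erase _ (fun z => G.effRes ρ z) humem,
    ← Finset.add_sum_erase _ (fun z => G.effRes ρ z) hwmem]
  have hrest : ∑ z ∈ ((Finset.univ.erase x).erase u).erase w,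
      (contractPlus G x ρ e₁ e₂ u w).effRes ρ z
      ≤ ∑ z ∈ ((Finset.univ.erase x).erase u).erase w, G.effRes ρ z := by
    apply Finset.sum_le_sum
    intro z hzm
    obtain ⟨hzw, hzm2⟩ := Finset.mem_erase.mp hzm
    obtain ⟨hzu, hzm3⟩ := Finset.mem_erase.mp hzm2
    obtain ⟨hzx, _⟩ := Finset.mem_erase.mp hzm3
    exact hz z hzx hzu hzw
  calc (contractPlus G x ρ e₁ e₂ u w).effRes ρ x
        + ((contractPlus G x ρ e₁ e₂ u w).effRes ρ u
          + ((contractPlus G x ρ e₁ e₂ u w).effRes ρ w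
            + ∑ z ∈ ((Finset.univ.erase x).erase u).erase w,
                (contractPlus G x ρ e₁ e₂ u w).effRes ρ z))
        + ENNReal.ofReal (1 / 100)
      = ((contractPlus G x ρ e₁ e₂ u w).effRes ρ x
          + (contractPlus G x ρ e₁ e₂ u w).effRes ρ u
          + (contractPlus G x ρ e₁ e₂ u w).effRes ρ w + ENNReal.ofReal (1 / 100))
        + ∑ z ∈ ((Finset.univ.erase x).erase u).erase w,
            (contractPlus G x ρ e₁ e₂ u w).effRes ρ z := by ring
    _ ≤ (G.effRes ρ x + G.effRes ρ u + G.effRes ρ w)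
        + ∑ z ∈ ((Finset.univ.erase x).erase u).erase w, G.effRes ρ z :=
          add_le_add hkey hrest
    _ = G.effRes ρ x + (G.effRes ρ u + (G.effRes ρ w
        + ∑ z ∈ ((Finset.univ.erase x).erase u).erase w, G.effRes ρ z)) := by ring
end
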